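/- arXiv:1705.06596 — 5 statements merged into one kernel-verified Lean document; each statement's English description precedes it below -/
import Mathlib

section
/- Let R be a commutative Noetherian ring and let α be an automorphism of R such that R is α-special, with α-special element a. Let S = R[θ; α]. Then (1 − aθ)S is a maximal right ideal of S. If in addition α has infinite order, then V := S/(1 − aθ)S is a faithful simple right S-module. -/
/-!
STATEMENT 4: Let R be a commutative Noetherian ring and α an automorphism of R such that
R is α-special, with α-special element a. Let S = R[θ; α]. Then (1 − aθ)S is a maximal
right ideal of S. If in addition α has infinite order, then V := S/(1 − aθ)S is a
faithful simple right S-module.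
-/

open MulOpposite

/-- `S`, together with the embedding `i : R →+* S` and the element `θ`, is the skew
polynomial ring `R[θ; α]`. -/
structure IsSkewPolynomialRing {R S : Type*} [Ring R] [Ring S]
    (α : R ≃+* R) (i : R →+* S) (θ : S) : Prop where
  theta_mul : ∀ r : R, θ * i r = i (α r) * θ
  exists_unique_repr : ∀ s : S, ∃! f : ℕ →₀ R, s = f.sum fun n r => i r * θ ^ n

/-- `a` is an `α`-special element of the commutative ring `R`:
all the norms `N_n^α(a) = a·α(a)⋯α^{n-1}(a)` are non-zero, and every non-zero α-stable
ideal of `R` contains some `N_n^α(a)` with `n ≥ 1`. -/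
def IsAlphaSpecialElement {R : Type*} [CommRing R] (α : R ≃+* R) (a : R) : Prop :=
  (∀ n : ℕ, 0 < n → (∏ k ∈ Finset.range n, (⇑α)^[k] a) ≠ 0) ∧
  (∀ I : Ideal R, (∀ r : R, r ∈ I ↔ α r ∈ I) → I ≠ ⊥ →
    ∃ n : ℕ, 0 < n ∧ (∏ k ∈ Finset.range n, (⇑α)^[k] a) ∈ I)

section A1
variable {R S : Type*} [CommRing R] [Ring S]
variable (α : R ≃+* R)

lemma iterate_coe (m : ℕ) : (⇑α)^[m] = ⇑(α.toRingHom ^ m) := by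
  rw [RingHom.coe_pow]; rfl

def NN (a : R) (n : ℕ) : R := ∏ k ∈ Finset.range n, (⇑α)^[k] a

lemma NN_zero (a : R) : NN α a 0 = 1 := by simp [NN]

lemma NN_succ (a : R) (n : ℕ) : NN α a (n + 1) = NN α a n * (⇑α)^[n] a := by
  simp [NN, Finset.prod_range_succ]

lemma NN_succ' (a : R) (n : ℕ) : NN α a (n + 1) = a * α (NN α a n) := by
  rw [NN, NN, Finset.prod_range_succ', map_prod]
  simp only [Function.iterate_succ_apply', Function.iterate_zero_apply]
  ring

lemma NN_add (a : R) (m n : ℕ) : NN α a (m + n) = NN α a m * (⇑α)^[m] (NN α a n) := by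
  rw [NN, NN, NN, Finset.prod_range_add, iterate_coe, map_prod]
  congr 1
  refine Finset.prod_congr rfl fun k _ => ?_
  rw [← iterate_coe, ← Function.iterate_add_apply]
end A1

section A2
variable {R S : Type*} [CommRing R] [Ring S]
variable {α : R ≃+* R} {i : R →+* S} {θ : S}

noncomputable def eehom (i : R →+* S) (θ : S) : (ℕ →₀ R) →+ S :=
  AddMonoidHom.mk' (fun f => f.sum fun n r => i r * θ ^ n)
    (fun f g => Finsupp.sum_add_index' (fun n => by simp) (fun n r r' => by rw [map_add, add_mul]))

lemma eehom_apply (f : ℕ →₀ R) : eehom i θ f = f.sum fun n r => i r * θ ^ n := rfl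

lemma eehom_single (n : ℕ) (r : R) : eehom i θ (Finsupp.single n r) = i r * θ ^ n := by
  rw [eehom_apply]; exact Finsupp.sum_single_index (by simp)

noncomputable def cf (hS : IsSkewPolynomialRing α i θ) (s : S) : ℕ →₀ R :=
  (hS.exists_unique_repr s).choose

lemma cf_spec (hS : IsSkewPolynomialRing α i θ) (s : S) : s = eehom i θ (cf hS s) := by
  have h := (hS.exists_unique_repr s).choose_spec.1
  simpa [eehom_apply, cf] using h

lemma cf_eq (hS : IsSkewPolynomialRing α i θ) {s : S} {f : ℕ →₀ R}
    (h : s = eehom i θ f) : cf hS s = f := by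
  refine ((hS.exists_unique_repr s).choose_spec.2 f ?_).symm
  simpa [eehom_apply] using h

lemma theta_pow_mul (hS : IsSkewPolynomialRing α i θ) (m : ℕ) (r : R) :
    θ ^ m * i r = i ((⇑α)^[m] r) * θ ^ m := by
  induction m generalizing r with
  | zero => simp
  | succ m ih =>
      calc θ ^ (m+1) * i r = θ ^ m * (θ * i r) := by rw [pow_succ, mul_assoc]
      _ = θ ^ m * i (α r) * θ := by rw [hS.theta_mul, mul_assoc]
      _ = i ((⇑α)^[m] (α r)) * θ ^ m * θ := by rw [← ih, mul_assoc]
      _ = i ((⇑α)^[m+1] r) * θ ^ (m+1) := by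
            rw [Function.iterate_succ_apply, pow_succ, mul_assoc]

lemma mul_mono (hS : IsSkewPolynomialRing α i θ) (r x : R) (m k : ℕ) :
    (i r * θ ^ m) * (i x * θ ^ k) = i (r * (⇑α)^[m] x) * θ ^ (m + k) :=
  calc (i r * θ^m) * (i x * θ^k) = i r * ((θ^m * i x) * θ^k) := by rw [mul_assoc, mul_assoc]
  _ = i r * (i ((⇑α)^[m] x) * (θ^m * θ^k)) := by rw [theta_pow_mul hS, mul_assoc]
  _ = i (r * (⇑α)^[m] x) * θ^(m+k) := by rw [map_mul, pow_add, mul_assoc]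
end A2

section A3
variable {R S : Type*} [CommRing R] [Ring S]
variable {α : R ≃+* R} {i : R →+* S} {θ : S} {a : R}

def M0 (i : R →+* S) (θ : S) (a : R) : Submodule Sᵐᵒᵖ S :=
  Submodule.span Sᵐᵒᵖ {(1 : S) - i a * θ}

lemma mem_M0 {x : S} : x ∈ M0 i θ a ↔ ∃ u : S, x = (1 - i a * θ) * u := by
  rw [M0, Submodule.mem_span_singleton]
  constructor
  · rintro ⟨c, rfl⟩; exact ⟨c.unop, rfl⟩
  · rintro ⟨u, rfl⟩; exact ⟨op u, rfl⟩

lemma M0_mul_mem {x : S} (h : x ∈ M0 i θ a) (u : S) : x * u ∈ M0 i θ a := by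
  simpa [op_smul_eq_mul] using (M0 i θ a).smul_mem (op u) h

lemma sub_aθ_mem (s : S) : s - (i a * θ) * s ∈ M0 i θ a :=
  mem_M0.mpr ⟨s, by rw [sub_mul, one_mul]⟩

lemma sub_aθ_pow_mem (m : ℕ) (s : S) : s - (i a * θ) ^ m * s ∈ M0 i θ a := by
  induction m with
  | zero => simpa using (M0 i θ a).zero_mem
  | succ m ih =>
      have h2 : (i a * θ) ^ m * s - (i a * θ) ^ (m+1) * s ∈ M0 i θ a := by
        have h := sub_aθ_mem (i := i) (θ := θ) (a := a) ((i a * θ) ^ m * s)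
        rw [← mul_assoc, ← pow_succ'] at h
        exact h
      have h3 := (M0 i θ a).add_mem ih h2
      rwa [sub_add_sub_cancel] at h3

lemma aθ_pow (hS : IsSkewPolynomialRing α i θ) (m : ℕ) :
    (i a * θ) ^ m = i (NN α a m) * θ ^ m := by
  induction m with
  | zero => simp [NN_zero]
  | succ m ih =>
      calc (i a * θ)^(m+1) = (i a * θ^1) * (i (NN α a m) * θ^m) := by
            rw [pow_succ', ih, pow_one]
      _ = i (a * (⇑α)^[1] (NN α a m)) * θ^(1+m) := mul_mono hS ..
      _ = i (NN α a (m+1)) * θ^(m+1) := by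
            rw [Function.iterate_one, ← NN_succ', add_comm]

lemma red_mono (hS : IsSkewPolynomialRing α i θ) (r : R) (k m : ℕ) :
    i r * θ ^ k - i (NN α a m * (⇑α)^[m] r) * θ ^ (m + k) ∈ M0 i θ a := by
  have h := sub_aθ_pow_mem (i := i) (θ := θ) (a := a) m (i r * θ ^ k)
  rwa [aθ_pow hS, mul_mono hS] at h

noncomputable def psi (α : R ≃+* R) (a : R) (D : ℕ) : (ℕ →₀ R) →+ R :=
  AddMonoidHom.mk' (fun f => f.sum fun k r => NN α a (D - k) * (⇑α)^[D - k] r)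
    (fun f g => Finsupp.sum_add_index' (fun k => by simp)
      (fun k r r' => by rw [iterate_map_add, mul_add]))

lemma psi_apply (D : ℕ) (f : ℕ →₀ R) :
    psi α a D f = f.sum fun k r => NN α a (D - k) * (⇑α)^[D - k] r := rfl

lemma psi_single (D k : ℕ) (r : R) :
    psi α a D (Finsupp.single k r) = NN α a (D - k) * (⇑α)^[D - k] r := by
  rw [psi_apply]; exact Finsupp.sum_single_index (by simp)

lemma red (hS : IsSkewPolynomialRing α i θ) (s : S) (D : ℕ)
    (hD : ∀ k ∈ (cf hS s).support, k ≤ D) :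
    s - i (psi α a D (cf hS s)) * θ ^ D ∈ M0 i θ a := by
  set f := cf hS s with hf
  have hs : s = ∑ k ∈ f.support, i (f k) * θ ^ k := cf_spec hS s
  have hpsi : i (psi α a D f) * θ ^ D
      = ∑ k ∈ f.support, i (NN α a (D - k) * (⇑α)^[D - k] (f k)) * θ ^ D := by
    rw [psi_apply, Finsupp.sum, map_sum, Finset.sum_mul]
  have key : s - i (psi α a D f) * θ ^ D
      = ∑ k ∈ f.support, (i (f k) * θ ^ k - i (NN α a (D - k) * (⇑α)^[D - k] (f k)) * θ ^ D) := by
    rw [Finset.sum_sub_distrib, ← hs, ← hpsi]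
  rw [key]
  refine Submodule.sum_mem _ fun k hk => ?_
  have h := red_mono (a := a) hS (f k) k (D - k)
  rwa [Nat.sub_add_cancel (hD k hk)] at h

lemma M0_psi (hS : IsSkewPolynomialRing α i θ) {x : S} (hx : x ∈ M0 i θ a) :
    ∃ D, (∀ k ∈ (cf hS x).support, k ≤ D) ∧ psi α a D (cf hS x) = 0 := by
  obtain ⟨u, rfl⟩ := mem_M0.mp hx
  set g := cf hS u with hg
  set T : ℕ →₀ R := g.sum fun k r => Finsupp.single (k+1) (a * α r) with hT
  set D := (g.support.sup id) + 1 with hD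
  have hgD : ∀ k ∈ g.support, k < D := fun k hk =>
    Nat.lt_succ_of_le (Finset.le_sup (f := id) hk)
  have hTsup : ∀ k ∈ T.support, k ≤ D := by
    intro k hk
    have h1 := Finsupp.support_sum hk
    obtain ⟨j, hj, hk2⟩ := Finset.mem_biUnion.mp h1
    have := Finsupp.support_single_subset hk2
    simp only [Finset.mem_singleton] at this
    subst this
    exact Nat.succ_le_of_lt (hgD j hj)
  have h1 : (1 - i a * θ) * u = eehom i θ (g - T) := by
    rw [map_sub, sub_mul, one_mul]
    congr 1
    · exact cf_spec hS u
    · rw [hT, map_finsuppSum]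
      conv_lhs => rw [cf_spec hS u, ← hg, eehom_apply, Finsupp.sum, Finset.mul_sum]
      rw [Finsupp.sum]
      refine Finset.sum_congr rfl fun k hk => ?_
      rw [eehom_single]
      have : i a * θ * (i (g k) * θ ^ k) = (i a * θ ^ 1) * (i (g k) * θ ^ k) := by
        rw [pow_one]
      rw [this, mul_mono hS, Function.iterate_one, add_comm]
  have hcf : cf hS ((1 - i a * θ) * u) = g - T := cf_eq hS h1
  refine ⟨D, ?_, ?_⟩
  · intro k hk
    rw [hcf] at hk
    rcases Finset.mem_union.mp (Finsupp.support_sub hk) with h | h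
    · exact le_of_lt (hgD k h)
    · exact hTsup k h
  · rw [hcf, map_sub]
    have hTg : psi α a D T = psi α a D g := by
      rw [hT, map_finsuppSum]
      conv_rhs => rw [psi_apply]
      refine Finsupp.sum_congr fun k hk => ?_
      rw [psi_single]
      have hk' : k < D := hgD k hk
      have e1 : D - k = (D - (k+1)) + 1 := by omega
      rw [iterate_map_mul, ← Function.iterate_succ_apply, e1, NN_succ]
      ring
    rw [hTg, sub_self]

lemma NN_kill {m m' : ℕ} (h : m ≤ m') {w : R} (h0 : NN α a m * (⇑α)^[m] w = 0) :
    NN α a m' * (⇑α)^[m'] w = 0 := by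
  induction m', h using Nat.le_induction with
  | base => exact h0
  | succ n hn ih =>
      rw [NN_succ', Function.iterate_succ_apply', mul_assoc, ← map_mul, ih, map_zero, mul_zero]

lemma mono_mem_M0 (hS : IsSkewPolynomialRing α i θ) {c : R} {k : ℕ}
    (h : i c * θ ^ k ∈ M0 i θ a) :
    ∃ m, NN α a m * (⇑α)^[m] c = 0 := by
  by_cases hc : c = 0
  · exact ⟨0, by simp [hc]⟩
  obtain ⟨D, hD, hpsi⟩ := M0_psi hS h
  have hcf : cf hS (i c * θ ^ k) = Finsupp.single k c := cf_eq hS (by rw [eehom_single])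
  rw [hcf] at hD hpsi
  have hkD : k ≤ D := hD k (by simp [Finsupp.mem_support_iff, hc])
  rw [psi_single] at hpsi
  exact ⟨D - k, hpsi⟩
end A3

section A4
variable {R S : Type*} [CommRing R] [Ring S]
variable {α : R ≃+* R} {i : R →+* S} {θ : S} {a : R}

lemma one_sub_NN_mem (hS : IsSkewPolynomialRing α i θ) (E : ℕ) :
    (1 : S) - i (NN α a E) * θ ^ E ∈ M0 i θ a := by
  have h := red_mono (a := a) hS 1 0 E
  simpa using h

lemma one_not_mem_M0 (hS : IsSkewPolynomialRing α i θ) (ha : IsAlphaSpecialElement α a) :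
    (1 : S) ∉ M0 i θ a := by
  intro h
  have h1 : i (1 : R) * θ ^ 0 ∈ M0 i θ a := by simpa using h
  obtain ⟨m, hm⟩ := mono_mem_M0 hS h1
  rw [iterate_map_one, mul_one] at hm
  rcases Nat.eq_zero_or_pos m with rfl | hm0
  · rw [NN_zero] at hm
    have h2 : (NN α a 1 : R) = 0 := by rw [← mul_one (NN α a 1), hm, mul_zero]
    exact ha.1 1 Nat.one_pos h2
  · exact ha.1 m hm0 hm

lemma M0_coatom [IsNoetherianRing R] (hS : IsSkewPolynomialRing α i θ)
    (ha : IsAlphaSpecialElement α a) : IsCoatom (M0 i θ a) := by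
  constructor
  · intro h; exact one_not_mem_M0 hS ha (h ▸ Submodule.mem_top)
  · intro M hM
    obtain ⟨s, hsM, hsM0⟩ := SetLike.exists_of_lt hM
    have hM0le : M0 i θ a ≤ M := le_of_lt hM
    set f := cf hS s with hf
    set D := f.support.sup id with hD
    have hDs : ∀ k ∈ f.support, k ≤ D := fun k hk => Finset.le_sup (f := id) hk
    set c := psi α a D f with hc
    have hred : s - i c * θ ^ D ∈ M0 i θ a := red hS s D hDs
    have hcM : i c * θ ^ D ∈ M := by
      have h2 := Submodule.sub_mem M hsM (hM0le hred)
      simpa using h2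
    have hc0 : c ≠ 0 := by
      intro h0
      apply hsM0
      have h2 := hred
      rw [h0, map_zero, zero_mul, sub_zero] at h2
      exact h2
    have Mmul : ∀ x ∈ M, ∀ u : S, x * u ∈ M := fun x hx u => by
      simpa [op_smul_eq_mul] using M.smul_mem (op u) hx
    have raise : ∀ (r : R) (e e' : ℕ), e ≤ e' → i r * θ ^ e ∈ M → i r * θ ^ e' ∈ M := by
      intro r e e' h he
      have h2 := Mmul _ he (θ ^ (e' - e))
      rwa [mul_assoc, ← pow_add, Nat.add_sub_cancel' h] at h2
    have coefmul : ∀ (r x : R) (e : ℕ), i r * θ ^ e ∈ M → i (r * x) * θ ^ e ∈ M := by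
      intro r x e he
      have h1 := Mmul _ he (i ((⇑α.symm)^[e] x))
      have h3 : (i r * θ ^ e) * (i ((⇑α.symm)^[e] x) * θ ^ 0)
          = i (r * (⇑α)^[e] ((⇑α.symm)^[e] x)) * θ ^ (e + 0) := mul_mono hS ..
      have h4 : (⇑α)^[e] ((⇑α.symm)^[e] x) = x :=
        Function.LeftInverse.iterate α.apply_symm_apply e x
      rw [h4, pow_zero, mul_one, add_zero] at h3
      rwa [h3] at h1
    let J : Ideal R :=
      { carrier := {r : R | ∃ e, i r * θ ^ e ∈ M}
        add_mem' := by
          rintro x y ⟨e₁, h₁⟩ ⟨e₂, h₂⟩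
          refine ⟨max e₁ e₂, ?_⟩
          have hx := raise x e₁ (max e₁ e₂) (le_max_left _ _) h₁
          have hy := raise y e₂ (max e₁ e₂) (le_max_right _ _) h₂
          have h2 := Submodule.add_mem M hx hy
          rwa [← add_mul, ← map_add] at h2
        zero_mem' := ⟨0, by simpa using M.zero_mem⟩
        smul_mem' := by
          rintro x r ⟨e, h⟩
          refine ⟨e, ?_⟩
          have h2 := coefmul r x e h
          rwa [mul_comm r x] at h2 }
    have hJc : c ∈ J := ⟨D, hcM⟩
    have haαJ : ∀ r ∈ J, a * α r ∈ J := by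
      rintro r ⟨e, he⟩
      refine ⟨1 + e, ?_⟩
      have hr := red_mono (a := a) hS r e 1
      have hNN1 : NN α a 1 * (⇑α)^[1] r = a * α r := by
        simp [NN]
      rw [hNN1] at hr
      have h2 := Submodule.sub_mem M he (hM0le hr)
      rwa [sub_sub_cancel] at h2
    have Qraise : ∀ (x : R) (m : ℕ), NN α a m * (⇑α)^[m] x ∈ J →
        NN α a (m+1) * (⇑α)^[m+1] x ∈ J := by
      intro x m h
      have h2 := haαJ _ h
      rw [map_mul, ← mul_assoc, ← NN_succ'] at h2
      have e3 : α ((⇑α)^[m] x) = (⇑α)^[m+1] x := (Function.iterate_succ_apply' _ _ _).symm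
      rwa [e3] at h2
    have Qraise' : ∀ (x : R) (m m' : ℕ), m ≤ m' → NN α a m * (⇑α)^[m] x ∈ J →
        NN α a m' * (⇑α)^[m'] x ∈ J := by
      intro x m m' hmm h
      induction m', hmm using Nat.le_induction with
      | base => exact h
      | succ n hn ih => exact Qraise x n ih
    let Q : Ideal R :=
      { carrier := {x : R | ∃ m, NN α a m * (⇑α)^[m] x ∈ J}
        add_mem' := by
          rintro x y ⟨m₁, h₁⟩ ⟨m₂, h₂⟩
          refine ⟨max m₁ m₂, ?_⟩
          have hx := Qraise' x m₁ (max m₁ m₂) (le_max_left _ _) h₁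
          have hy := Qraise' y m₂ (max m₁ m₂) (le_max_right _ _) h₂
          have h2 := J.add_mem hx hy
          rwa [← mul_add, ← iterate_map_add] at h2
        zero_mem' := ⟨0, by simpa using J.zero_mem⟩
        smul_mem' := by
          rintro x r ⟨m, h⟩
          refine ⟨m, ?_⟩
          have h2 := J.mul_mem_right ((⇑α)^[m] x) h
          rw [smul_eq_mul]
          rwa [iterate_map_mul, show NN α a m * ((⇑α)^[m] x * (⇑α)^[m] r)
            = NN α a m * (⇑α)^[m] r * (⇑α)^[m] x from by ring] }
    have hQc : c ∈ Q := ⟨0, by simpa [NN_zero] using hJc⟩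
    have Qback : ∀ x : R, α x ∈ Q → x ∈ Q := by
      rintro x ⟨m, hm⟩
      refine ⟨m + 1, ?_⟩
      have h2 := J.mul_mem_right ((⇑α)^[m] a) hm
      rwa [show NN α a m * (⇑α)^[m] (α x) * (⇑α)^[m] a
        = NN α a (m+1) * (⇑α)^[m+1] x from by
          rw [NN_succ, ← Function.iterate_succ_apply]; ring] at h2
    have memCC : ∀ (k : ℕ) (x : R),
        x ∈ Ideal.comap (α.symm.toRingHom ^ k) Q ↔ (⇑α.symm)^[k] x ∈ Q := by
      intro k x
      rw [Ideal.mem_comap]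
      rw [show (α.symm.toRingHom ^ k) x = (⇑α.symm)^[k] x from
        (congrFun (iterate_coe α.symm k) x).symm]
    have CCmono : Monotone (fun k => Ideal.comap (α.symm.toRingHom ^ k) Q) := by
      refine monotone_nat_of_le_succ fun k => ?_
      intro x hx
      rw [memCC] at hx ⊢
      rw [Function.iterate_succ_apply']
      exact Qback _ (by rwa [α.apply_symm_apply])
    obtain ⟨nst, hstab⟩ := monotone_stabilizes_iff_noetherian.mpr inferInstance
      ⟨fun k => Ideal.comap (α.symm.toRingHom ^ k) Q, CCmono⟩
    have hQstab : ∀ x : R, x ∈ Q ↔ α x ∈ Q := by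
      intro x
      constructor
      · intro hx
        have e1 : (⇑α.symm)^[nst] ((⇑α)^[nst] (α x)) = α x :=
          Function.LeftInverse.iterate α.symm_apply_apply nst _
        have e2 : (⇑α.symm)^[nst + 1] ((⇑α)^[nst] (α x)) = x := by
          rw [Function.iterate_succ_apply', e1, α.symm_apply_apply]
        have hz : (⇑α)^[nst] (α x) ∈ Ideal.comap (α.symm.toRingHom ^ (nst+1)) Q := by
          rw [memCC, e2]; exact hx
        have h5 := hstab (nst + 1) (Nat.le_succ _)
        simp only [OrderHom.coe_mk] at h5
        rw [← h5] at hz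
        rw [memCC, e1] at hz
        exact hz
      · exact Qback x
    have hQbot : Q ≠ ⊥ := by
      intro h
      rw [h, Submodule.mem_bot] at hQc
      exact hc0 hQc
    obtain ⟨n, hn, hNn⟩ := ha.2 Q hQstab hQbot
    obtain ⟨m, hm⟩ := hNn
    have hm2 : NN α a m * (⇑α)^[m] (NN α a n) ∈ J := hm
    rw [← NN_add] at hm2
    clear hm
    have hm := hm2
    obtain ⟨e, he⟩ := hm
    set E := max e (m + n) with hE
    have h1 : i (NN α a (m + n)) * θ ^ E ∈ M := raise _ e E (le_max_left _ _) he
    have h2 : i (NN α a E) * θ ^ E ∈ M := by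
      have h3 := coefmul _ ((⇑α)^[m + n] (NN α a (E - (m + n)))) E h1
      rwa [← NN_add, Nat.add_sub_cancel' (le_max_right _ _)] at h3
    have hone : (1 : S) ∈ M := by
      have h4 := Submodule.add_mem M (hM0le (one_sub_NN_mem hS E)) h2
      rwa [sub_add_cancel] at h4
    rw [Submodule.eq_top_iff']
    intro x
    have h6 := Mmul 1 hone x
    rwa [one_mul] at h6
end A4

section A5
variable {R S : Type*} [CommRing R] [Ring S]
variable {α : R ≃+* R} {i : R →+* S} {θ : S} {a : R}

lemma sum_single_apply (f : ℕ →₀ R) (g : ℕ → R → R) (hg : ∀ k, g k 0 = 0) (k : ℕ) :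
    (f.sum fun j v => Finsupp.single j (g j v)) k = g k (f k) := by
  classical
  rw [Finsupp.sum_apply]
  have h1 : (f.sum fun j v => Finsupp.single j (g j v) k)
      = f.sum fun j v => if j = k then g j v else 0 := by
    refine Finsupp.sum_congr fun j hj => ?_
    rw [Finsupp.single_apply]
  rw [h1, Finsupp.sum_ite_eq']
  split_ifs with h
  · rfl
  · rw [Finsupp.notMem_support_iff.mp h, hg]

lemma ann_zero [IsNoetherianRing R] (hS : IsSkewPolynomialRing α i θ)
    (ha : IsAlphaSpecialElement α a)
    (hα : ∀ n : ℕ, 0 < n → (⇑α)^[n] ≠ id) (s : S)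
    (hs : ∀ x : S, x * s ∈ M0 i θ a) : s = 0 := by
  classical
  by_contra hs0
  set P : ℕ → Prop := fun n => ∃ t : S, (∀ x : S, x * t ∈ M0 i θ a) ∧ t ≠ 0 ∧
    ∀ k ∈ (cf hS t).support, k ≤ n with hP
  have hPex : ∃ n, P n :=
    ⟨(cf hS s).support.sup id, s, hs, hs0, fun k hk => Finset.le_sup (f := id) hk⟩
  set d := Nat.find hPex with hd
  obtain ⟨t, htA, ht0, htd⟩ := Nat.find_spec hPex
  have cf_ne : ∀ u : S, u ≠ 0 → cf hS u ≠ 0 := by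
    intro u hu hcf
    apply hu
    rw [cf_spec hS u, hcf, map_zero]
  have hmin : ∀ u : S, (∀ x : S, x * u ∈ M0 i θ a) → (∀ k ∈ (cf hS u).support, k < d) →
      u = 0 := by
    intro u hu hk
    by_contra hu0
    obtain ⟨k0, hk0⟩ := Finsupp.support_nonempty_iff.mpr (cf_ne u hu0)
    have hd1 : 1 ≤ d := by
      have := hk k0 hk0; omega
    have hPd : P (d - 1) := ⟨u, hu, hu0, fun k hkk => by have := hk k hkk; omega⟩
    exact Nat.find_min hPex (by omega) hPd
  set f := cf hS t with hf
  have hfd : d ∈ f.support := by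
    by_contra hnd
    rcases Nat.eq_zero_or_pos d with h0 | h1
    · apply ht0
      have hz : f = 0 := by
        ext k
        by_contra hfk
        have hkk := Finsupp.mem_support_iff.mpr hfk
        have h2 := htd k hkk
        have : k = d := by omega
        exact hnd (this ▸ hkk)
      rw [cf_spec hS t, ← hf, hz, map_zero]
    · have hPd : P (d - 1) := ⟨t, htA, ht0, fun k hk => by
        have h2 := htd k hk
        have h3 : k ≠ d := fun h => hnd (h ▸ hk)
        omega⟩
      exact Nat.find_min hPex (by omega) hPd
  -- Step 1
  have step1 : ∀ r : R, ∀ k, f k * ((⇑α)^[k] r - (⇑α)^[d] r) = 0 := by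
    intro r
    set h : ℕ →₀ R :=
      f.sum (fun k v => Finsupp.single k (v * ((⇑α)^[k] r - (⇑α)^[d] r))) with hh
    have huA : ∀ x : S, x * (t * i r - i ((⇑α)^[d] r) * t) ∈ M0 i θ a := by
      intro x
      have h1 : x * (t * i r - i ((⇑α)^[d] r) * t)
          = (x * t) * i r - (x * i ((⇑α)^[d] r)) * t := by
        rw [mul_sub, ← mul_assoc, ← mul_assoc]
      rw [h1]
      exact Submodule.sub_mem _ (M0_mul_mem (htA x) (i r)) (htA (x * i ((⇑α)^[d] r)))
    have heq : t * i r - i ((⇑α)^[d] r) * t = eehom i θ h := by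
      rw [hh, map_finsuppSum]
      have hR : (f.sum fun k v => eehom i θ (Finsupp.single k (v * ((⇑α)^[k] r - (⇑α)^[d] r))))
          = ∑ k ∈ f.support, i (f k * ((⇑α)^[k] r - (⇑α)^[d] r)) * θ ^ k := by
        rw [Finsupp.sum]
        exact Finset.sum_congr rfl fun k hk => by rw [eehom_single]
      rw [hR]
      have hL1 : t * i r = ∑ k ∈ f.support, i (f k * (⇑α)^[k] r) * θ ^ k := by
        conv_lhs => rw [cf_spec hS t, ← hf, eehom_apply, Finsupp.sum]
        rw [Finset.sum_mul]
        refine Finset.sum_congr rfl fun k hk => ?_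
        calc (i (f k) * θ ^ k) * i r = (i (f k) * θ ^ k) * (i r * θ ^ 0) := by
              rw [pow_zero, mul_one]
        _ = i (f k * (⇑α)^[k] r) * θ ^ (k + 0) := mul_mono hS ..
        _ = i (f k * (⇑α)^[k] r) * θ ^ k := by rw [add_zero]
      have hL2 : i ((⇑α)^[d] r) * t = ∑ k ∈ f.support, i ((⇑α)^[d] r * f k) * θ ^ k := by
        conv_lhs => rw [cf_spec hS t, ← hf, eehom_apply, Finsupp.sum]
        rw [Finset.mul_sum]
        exact Finset.sum_congr rfl fun k hk => by rw [← mul_assoc, ← map_mul]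
      rw [hL1, hL2, ← Finset.sum_sub_distrib]
      refine Finset.sum_congr rfl fun k hk => ?_
      rw [← sub_mul, ← map_sub]
      congr 2
      ring
    have hcfu : cf hS (t * i r - i ((⇑α)^[d] r) * t) = h := cf_eq hS heq
    have hhd : h d = 0 := by
      rw [hh, sum_single_apply _ _ (fun k => by rw [zero_mul])]
      simp
    have hu0 : t * i r - i ((⇑α)^[d] r) * t = 0 := by
      refine hmin _ huA ?_
      intro k hk
      rw [hcfu] at hk
      have hks : k ∈ f.support := by
        have h2 := Finsupp.support_sum hk
        obtain ⟨j, hj, hk2⟩ := Finset.mem_biUnion.mp h2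
        have h3 := Finsupp.support_single_subset hk2
        simp only [Finset.mem_singleton] at h3
        exact h3 ▸ hj
      have hkd : k ≠ d := by
        intro h2; subst h2
        exact (Finsupp.mem_support_iff.mp hk) hhd
      have := htd k hks
      omega
    have hh0 : h = 0 := by
      rw [← hcfu, hu0]
      exact cf_eq hS (by rw [map_zero])
    intro k
    have h4 := congrArg (fun g : ℕ →₀ R => g k) hh0
    simp only [Finsupp.coe_zero, Pi.zero_apply] at h4
    rwa [hh, sum_single_apply _ _ (fun j => by rw [zero_mul])] at h4
  -- Step 2
  have hcomm : ∀ (j : ℕ) (x : R), α ((⇑α)^[j] x) = (⇑α)^[j] (α x) := fun j x =>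
    (Function.iterate_succ_apply' (⇑α) j x).symm.trans (Function.iterate_succ_apply (⇑α) j x)
  have hcomm' : ∀ (j : ℕ) (x : R), α.symm ((⇑α)^[j] x) = (⇑α)^[j] (α.symm x) := by
    intro j x
    apply α.injective
    rw [α.apply_symm_apply, hcomm, α.apply_symm_apply]
  have step2 : ∀ k ∈ f.support, k = d := by
    intro k hk
    by_contra hkd
    have hkltd : k < d := lt_of_le_of_ne (htd k hk) hkd
    set n₀ := d - k with hn0
    have hn0pos : 0 < n₀ := by omega
    have key : ∀ r : R, f k * (r - (⇑α)^[n₀] r) = 0 := by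
      intro r
      have h1 := step1 ((⇑α.symm)^[k] r) k
      have e1 : (⇑α)^[k] ((⇑α.symm)^[k] r) = r :=
        Function.LeftInverse.iterate α.apply_symm_apply k r
      have e2 : (⇑α)^[d] ((⇑α.symm)^[k] r) = (⇑α)^[n₀] r := by
        have hdk : d = n₀ + k := by omega
        rw [hdk, Function.iterate_add_apply, e1]
      rwa [e1, e2] at h1
    by_cases hW : ∀ r : R, r - (⇑α)^[n₀] r = 0
    · exact hα n₀ hn0pos (funext fun r => (sub_eq_zero.mp (hW r)).symm)
    · push_neg at hW
      set W : Ideal R := Ideal.span {x : R | ∃ r : R, x = r - (⇑α)^[n₀] r} with hWdef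
      have Wgen : ∀ r : R, r - (⇑α)^[n₀] r ∈ W := fun r => Ideal.subset_span ⟨r, rfl⟩
      have hWbot : W ≠ ⊥ := by
        obtain ⟨r, hr⟩ := hW
        intro hbot
        apply hr
        have h2 := Wgen r
        rwa [hbot, Submodule.mem_bot] at h2
      have Wmap : ∀ x ∈ W, α x ∈ W := by
        intro x hx
        refine Submodule.span_induction ?_ ?_ ?_ ?_ hx
        · rintro y ⟨r, rfl⟩
          rw [map_sub, hcomm]
          exact Wgen (α r)
        · rw [map_zero]; exact W.zero_mem
        · intro y z _ _ hy hz; rw [map_add]; exact W.add_mem hy hz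
        · intro cc y _ hy
          rw [smul_eq_mul, map_mul]
          exact W.mul_mem_left _ hy
      have Wmap' : ∀ x ∈ W, α.symm x ∈ W := by
        intro x hx
        refine Submodule.span_induction ?_ ?_ ?_ ?_ hx
        · rintro y ⟨r, rfl⟩
          rw [map_sub, hcomm']
          exact Wgen (α.symm r)
        · rw [map_zero]; exact W.zero_mem
        · intro y z _ _ hy hz; rw [map_add]; exact W.add_mem hy hz
        · intro cc y _ hy
          rw [smul_eq_mul, map_mul]
          exact W.mul_mem_left _ hy
      have Wstab : ∀ r : R, r ∈ W ↔ α r ∈ W := fun r =>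
        ⟨Wmap r, fun h2 => by
          have h3 := Wmap' _ h2
          rwa [α.symm_apply_apply] at h3⟩
      set Pid : Ideal R :=
        { carrier := {x : R | ∀ r : R, x * (r - (⇑α)^[n₀] r) = 0}
          add_mem' := by
            intro x y hx hy r
            rw [add_mul, hx r, hy r, add_zero]
          zero_mem' := fun r => zero_mul _
          smul_mem' := by
            intro cc x hx r
            rw [smul_eq_mul, mul_assoc, hx r, mul_zero] } with hPid
      have hPfk : f k ∈ Pid := key
      have hPbot : Pid ≠ ⊥ := by
        intro hbot
        rw [hbot, Submodule.mem_bot] at hPfk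
        exact (Finsupp.mem_support_iff.mp hk) hPfk
      have Pstab : ∀ x : R, x ∈ Pid ↔ α x ∈ Pid := by
        intro x
        constructor
        · intro hx r
          have h1 := hx (α.symm r)
          have h2 : α x * (r - (⇑α)^[n₀] r)
              = α (x * (α.symm r - (⇑α)^[n₀] (α.symm r))) := by
            rw [map_mul, map_sub, α.apply_symm_apply, hcomm, α.apply_symm_apply]
          rw [h2, h1, map_zero]
        · intro hx r
          have h1 := hx (α r)
          have h2 : x * (r - (⇑α)^[n₀] r)
              = α.symm (α x * (α r - (⇑α)^[n₀] (α r))) := by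
            rw [map_mul, map_sub, α.symm_apply_apply, hcomm', α.symm_apply_apply]
          rw [h2, h1, map_zero]
      obtain ⟨nP, hnP, hNnP⟩ := ha.2 Pid Pstab hPbot
      obtain ⟨mW, hmW, hNmW⟩ := ha.2 W Wstab hWbot
      have hkill : ∀ w ∈ W, NN α a nP * w = 0 := by
        intro w hw
        refine Submodule.span_induction ?_ ?_ ?_ ?_ hw
        · rintro y ⟨r, rfl⟩; exact hNnP r
        · rw [mul_zero]
        · intro y z _ _ hy hz; rw [mul_add, hy, hz, add_zero]
        · intro cc y _ hy
          rw [smul_eq_mul, ← mul_assoc, mul_comm (NN α a nP) cc, mul_assoc, hy, mul_zero]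
      have hiter : ∀ (j : ℕ) (x : R), x ∈ W → (⇑α)^[j] x ∈ W := by
        intro j
        induction j with
        | zero => intro x hx; simpa using hx
        | succ j ih =>
            intro x hx
            rw [Function.iterate_succ_apply]
            exact ih _ (Wmap x hx)
      have hNN : NN α a (nP + mW) = 0 := by
        rw [NN_add]
        exact hkill _ (hiter nP _ hNmW)
      exact ha.1 (nP + mW) (by omega) hNN
  -- t is a monomial
  have hmono : f = Finsupp.single d (f d) := by
    ext k
    by_cases hk : k ∈ f.support
    · have h2 := step2 k hk; subst h2; rw [Finsupp.single_eq_same]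
    · have h1 : f k = 0 := Finsupp.notMem_support_iff.mp hk
      rw [h1, Finsupp.single_apply]
      split_ifs with h2
      · rw [h2]; exact h1.symm
      · rfl
  set c := f d with hcdef
  have hc0 : c ≠ 0 := Finsupp.mem_support_iff.mp hfd
  have ht : t = i c * θ ^ d := by
    conv_lhs => rw [cf_spec hS t, ← hf, hmono, eehom_single]
  -- monomial annihilation
  have mono : ∀ (r : R) (j : ℕ), ∃ m₀, ∀ m ≥ m₀,
      NN α a m * ((⇑α)^[m] r * (⇑α)^[m + j] c) = 0 := by
    intro r j
    have h1 : (i r * θ ^ j) * t ∈ M0 i θ a := htA _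
    rw [ht, mul_mono hS] at h1
    obtain ⟨m₁, hm₁⟩ := mono_mem_M0 hS h1
    refine ⟨m₁, fun m hm => ?_⟩
    have h2 := NN_kill (a := a) hm hm₁
    rwa [iterate_map_mul, ← Function.iterate_add_apply] at h2
  -- the orbit ideal
  set C0 : Ideal R := Ideal.span (Set.range fun j : ℕ => (⇑α)^[j] c) with hC0
  have C0gen : ∀ j : ℕ, (⇑α)^[j] c ∈ C0 := fun j => Ideal.subset_span ⟨j, rfl⟩
  have C0map : ∀ x ∈ C0, α x ∈ C0 := by
    intro x hx
    refine Submodule.span_induction ?_ ?_ ?_ ?_ hx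
    · rintro y ⟨j, rfl⟩
      have e1 : α ((⇑α)^[j] c) = (⇑α)^[j+1] c := (Function.iterate_succ_apply' (⇑α) j c).symm
      rw [e1]
      exact C0gen (j + 1)
    · rw [map_zero]; exact C0.zero_mem
    · intro y z _ _ hy hz; rw [map_add]; exact C0.add_mem hy hz
    · intro cc y _ hy
      rw [smul_eq_mul, map_mul]
      exact C0.mul_mem_left _ hy
  have memCC : ∀ (k : ℕ) (x : R),
      x ∈ Ideal.comap (α.toRingHom ^ k) C0 ↔ (⇑α)^[k] x ∈ C0 := by
    intro k x
    rw [Ideal.mem_comap]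
    rw [show (α.toRingHom ^ k) x = (⇑α)^[k] x from (congrFun (iterate_coe α k) x).symm]
  have CCmono : Monotone (fun k => Ideal.comap (α.toRingHom ^ k) C0) := by
    refine monotone_nat_of_le_succ fun k => ?_
    intro x hx
    rw [memCC] at hx ⊢
    have e1 : (⇑α)^[k+1] x = α ((⇑α)^[k] x) := Function.iterate_succ_apply' (⇑α) k x
    rw [e1]
    exact C0map _ hx
  obtain ⟨K, hKst⟩ := monotone_stabilizes_iff_noetherian.mpr inferInstance
    ⟨fun k => Ideal.comap (α.toRingHom ^ k) C0, CCmono⟩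
  have CKstab : ∀ x : R, x ∈ Ideal.comap (α.toRingHom ^ K) C0 ↔
      α x ∈ Ideal.comap (α.toRingHom ^ K) C0 := by
    intro x
    constructor
    · intro hx
      have h1 : x ∈ Ideal.comap (α.toRingHom ^ (K+1)) C0 := by
        have h2 := hKst (K + 1) (Nat.le_succ _)
        simp only [OrderHom.coe_mk] at h2
        rw [← h2]; exact hx
      rw [memCC] at h1
      rw [memCC]
      rwa [Function.iterate_succ_apply] at h1
    · intro hx
      rw [memCC] at hx
      have h1 : x ∈ Ideal.comap (α.toRingHom ^ (K+1)) C0 := by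
        rw [memCC, Function.iterate_succ_apply]; exact hx
      have h2 := hKst (K + 1) (Nat.le_succ _)
      simp only [OrderHom.coe_mk] at h2
      rw [← h2] at h1
      exact h1
  have CKbot : Ideal.comap (α.toRingHom ^ K) C0 ≠ ⊥ := by
    intro hbot
    have h1 : c ∈ Ideal.comap (α.toRingHom ^ K) C0 := (memCC K c).mpr (C0gen K)
    rw [hbot, Submodule.mem_bot] at h1
    exact hc0 h1
  obtain ⟨n, hn, hNnC⟩ := ha.2 _ CKstab CKbot
  have hNnC2 : (⇑α)^[K] (NN α a n) ∈ C0 := (memCC K _).mp hNnC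
  rw [hC0] at hNnC2
  obtain ⟨w, hw⟩ := Finsupp.mem_span_range_iff_exists_finsupp.mp hNnC2
  set m₀f : ℕ → ℕ := fun j => Classical.choose (mono (NN α a K * w j) j) with hm0f
  have hm₀spec : ∀ j, ∀ m ≥ m₀f j,
      NN α a m * ((⇑α)^[m] (NN α a K * w j) * (⇑α)^[m + j] c) = 0 :=
    fun j => Classical.choose_spec (mono (NN α a K * w j) j)
  set m := w.support.sup m₀f with hmdef
  have hfinal : NN α a (m + (K + n)) = 0 := by
    rw [NN_add, NN_add (m := K) (n := n), ← hw]
    have e1 : NN α a K * (w.sum fun j x => x • (⇑α)^[j] c)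
        = ∑ j ∈ w.support, NN α a K * w j * (⇑α)^[j] c := by
      rw [Finsupp.sum, Finset.mul_sum]
      refine Finset.sum_congr rfl fun j hj => ?_
      rw [smul_eq_mul, mul_assoc]
    rw [e1, iterate_coe, map_sum, Finset.mul_sum]
    refine Finset.sum_eq_zero fun j hj => ?_
    rw [← iterate_coe]
    have h2 := hm₀spec j m (Finset.le_sup hj)
    rw [iterate_map_mul] at h2
    rw [iterate_map_mul, iterate_map_mul]
    have e2 : (⇑α)^[m] ((⇑α)^[j] c) = (⇑α)^[m + j] c :=
      (Function.iterate_add_apply (⇑α) m j c).symm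
    rw [e2]
    exact h2
  exact ha.1 (m + (K + n)) (by omega) hfinal

end A5


theorem maximal_and_faithful_of_special
    {R S : Type*} [CommRing R] [IsNoetherianRing R] [Ring S]
    (α : R ≃+* R) (i : R →+* S) (θ : S) (hS : IsSkewPolynomialRing α i θ)
    (a : R) (ha : IsAlphaSpecialElement α a) :
    -- (1 − aθ)S is a maximal right ideal of S
    IsCoatom (Submodule.span Sᵐᵒᵖ {(1 : S) - i a * θ}) ∧
    -- if α has infinite order then S/(1 − aθ)S is a faithful (simple) right S-module
    ((∀ n : ℕ, 0 < n → (⇑α)^[n] ≠ id) →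
      IsSimpleModule Sᵐᵒᵖ (S ⧸ Submodule.span Sᵐᵒᵖ {(1 : S) - i a * θ}) ∧
      Module.annihilator Sᵐᵒᵖ (S ⧸ Submodule.span Sᵐᵒᵖ {(1 : S) - i a * θ}) = ⊥) := by

  have hcoatom : IsCoatom (M0 i θ a) := M0_coatom hS ha
  refine ⟨hcoatom, fun hα => ⟨?_, ?_⟩⟩
  · exact isSimpleModule_iff_isCoatom.mpr hcoatom
  · rw [eq_bot_iff]
    intro x hx
    have hx2 := Module.mem_annihilator.mp hx
    have hsann : ∀ y : S, y * x.unop ∈ M0 i θ a := by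
      intro y
      have h1 := hx2 (Submodule.Quotient.mk y)
      have h2 : x • (Submodule.Quotient.mk y :
          S ⧸ Submodule.span Sᵐᵒᵖ {(1 : S) - i a * θ})
          = Submodule.Quotient.mk (y * x.unop) := by
        rw [← Submodule.Quotient.mk_smul]
        rfl
      rw [h2, Submodule.Quotient.mk_eq_zero] at h1
      exact h1
    have h3 := ann_zero hS ha hα x.unop hsann
    rw [Submodule.mem_bot]
    exact MulOpposite.unop_injective h3
end

section
/- Let α be an automorphism of a commutative ring R, let S = R[θ; α], and let ρ be a non-zero non-unit of R. Then S/ρS is not an Artinian right S-module. In fact, the chain θS + ρS ⊇ θ^2 S + ρS ⊇ ⋯ ⊇ θ^m S + ρS ⊇ ⋯ of right ideals of S is strictly descending. -/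
/-!
STATEMENT 8: Let α be an automorphism of a commutative ring R, let S = R[θ; α], and let
ρ be a non-zero non-unit of R. Then S/ρS is not an Artinian right S-module. In fact the
chain θS + ρS ⊇ θ²S + ρS ⊇ ⋯ of right ideals of S is strictly descending.
-/

open MulOpposite

theorem quotient_by_nonunit_not_artinian
    {R S : Type*} [CommRing R] [Ring S]
    (α : R ≃+* R) (i : R →+* S) (θ : S) (hS : IsSkewPolynomialRing α i θ)
    (ρ : R) (hρ0 : ρ ≠ 0) (hρu : ¬ IsUnit ρ) :
    -- S/ρS is not Artinian as a right S-module
    ¬ IsArtinian Sᵐᵒᵖ (S ⧸ Submodule.span Sᵐᵒᵖ {i ρ}) ∧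
    -- the chain θ^m S + ρS is strictly descending
    ∀ m : ℕ, 1 ≤ m →
      Submodule.span Sᵐᵒᵖ ({θ ^ (m + 1), i ρ} : Set S) <
        Submodule.span Sᵐᵒᵖ ({θ ^ m, i ρ} : Set S) := by
  classical
  -- coefficient function
  set c : S → (ℕ →₀ R) := fun s => (hS.exists_unique_repr s).choose with hc_def
  have hc1 : ∀ s : S, s = (c s).sum fun n r => i r * θ ^ n := fun s =>
    (hS.exists_unique_repr s).choose_spec.1
  have hc2 : ∀ s : S, ∀ f : ℕ →₀ R, (s = f.sum fun n r => i r * θ ^ n) → f = c s := fun s =>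
    (hS.exists_unique_repr s).choose_spec.2
  have hz : ∀ n : ℕ, i (0 : R) * θ ^ n = 0 := fun n => by rw [map_zero, zero_mul]
  -- c of θ^m
  have hcpow : ∀ m : ℕ, c (θ ^ m) = Finsupp.single m 1 := by
    intro m
    refine (hc2 _ _ ?_).symm
    rw [Finsupp.sum_single_index (hz m), map_one, one_mul]
  -- θ^k * i r
  have hθpow : ∀ (k : ℕ) (r : R), θ ^ k * i r = i ((α ^ k) r) * θ ^ k := by
    intro k
    induction k with
    | zero => intro r; simp
    | succ k ih =>
      intro r
      rw [pow_succ, mul_assoc, hS.theta_mul, ← mul_assoc, ih, mul_assoc, ← pow_succ]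
      rfl
  -- additivity of c
  have hcadd : ∀ s t : S, c (s + t) = c s + c t := by
    intro s t
    refine (hc2 _ _ ?_).symm
    rw [Finsupp.sum_add_index' hz (fun n b₁ b₂ => by rw [map_add, add_mul])]
    rw [← hc1, ← hc1]
  -- c (i ρ * t)
  have hcρ : ∀ (t : S) (n : ℕ), c (i ρ * t) n = ρ * c t n := by
    intro t n
    have : c (i ρ * t) = Finsupp.mapRange (fun r => ρ * r) (mul_zero ρ) (c t) := by
      refine (hc2 _ _ ?_).symm
      rw [Finsupp.sum_mapRange_index hz]
      conv_lhs => rw [hc1 t, Finsupp.mul_sum]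
      exact Finsupp.sum_congr fun n' _ => by rw [← mul_assoc, ← map_mul]
    rw [this]; rfl
  -- c (θ^(m+1) * s) vanishes in low degrees
  have hcθ : ∀ (m : ℕ) (s : S) (n : ℕ), n ≤ m → c (θ ^ (m + 1) * s) n = 0 := by
    intro m s n hn
    have : c (θ ^ (m + 1) * s) =
        Finsupp.mapDomain (· + (m + 1))
          (Finsupp.mapRange (α ^ (m + 1) : R ≃+* R) (map_zero _) (c s)) := by
      refine (hc2 _ _ ?_).symm
      rw [Finsupp.sum_mapDomain_index_inj (add_left_injective (m + 1)),
        Finsupp.sum_mapRange_index (fun k => hz _)]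
      conv_lhs => rw [hc1 s, Finsupp.mul_sum]
      refine Finsupp.sum_congr fun k _ => ?_
      rw [← mul_assoc, hθpow, mul_assoc, ← pow_add, add_comm (m + 1) k]
    rw [this]
    refine Finsupp.mapDomain_notin_range _ _ ?_
    rintro ⟨k, hk⟩
    simp only at hk
    omega
  -- key non-membership
  have hkey : ∀ m : ℕ, θ ^ m ∉ Submodule.span Sᵐᵒᵖ ({θ ^ (m + 1), i ρ} : Set S) := by
    intro m hmem
    rw [Submodule.mem_span_pair] at hmem
    obtain ⟨a, b, hab⟩ := hmem
    rw [smul_eq_mul_unop, smul_eq_mul_unop] at hab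
    have h1 : c (θ ^ m) m = 1 := by rw [hcpow]; simp
    have h2 : c (θ ^ (m + 1) * unop a + i ρ * unop b) m = ρ * c (unop b) m := by
      rw [hcadd, Finsupp.add_apply, hcθ m _ m le_rfl, hcρ, zero_add]
    rw [← hab] at h1
    rw [h1] at h2
    exact hρu (IsUnit.of_mul_eq_one (a := ρ) _ h2.symm)
  -- inclusion
  have hle : ∀ m : ℕ, Submodule.span Sᵐᵒᵖ ({θ ^ (m + 1), i ρ} : Set S) ≤
      Submodule.span Sᵐᵒᵖ ({θ ^ m, i ρ} : Set S) := by
    intro m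
    rw [Submodule.span_le, Set.insert_subset_iff, Set.singleton_subset_iff]
    constructor
    · rw [SetLike.mem_coe, Submodule.mem_span_pair]
      exact ⟨op θ, 0, by rw [smul_eq_mul_unop, unop_op, ← pow_succ, zero_smul, add_zero]⟩
    · exact Submodule.subset_span (Set.mem_insert_of_mem _ rfl)
  have hlt : ∀ m : ℕ, Submodule.span Sᵐᵒᵖ ({θ ^ (m + 1), i ρ} : Set S) <
      Submodule.span Sᵐᵒᵖ ({θ ^ m, i ρ} : Set S) := by
    intro m
    refine lt_of_le_of_ne (hle m) fun h => hkey m ?_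
    rw [h]
    exact Submodule.subset_span (Set.mem_insert _ _)
  refine ⟨?_, fun m _ => hlt m⟩
  -- non-Artinian
  intro hart
  set p : Submodule Sᵐᵒᵖ S := Submodule.span Sᵐᵒᵖ {i ρ} with hp_def
  set N : ℕ → Submodule Sᵐᵒᵖ S := fun n => Submodule.span Sᵐᵒᵖ ({θ ^ n, i ρ} : Set S) with hN_def
  have hpN : ∀ n, p ≤ N n := by
    intro n
    rw [hp_def, Submodule.span_le, Set.singleton_subset_iff]
    exact Submodule.subset_span (Set.mem_insert_of_mem _ rfl)
  have hNanti : ∀ k l : ℕ, k ≤ l → N l ≤ N k := by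
    intro k l hkl
    induction l with
    | zero => rw [Nat.le_zero.mp hkl]
    | succ l ih =>
      rcases Nat.lt_or_ge k (l + 1) with h | h
      · exact le_trans (hle l) (ih (Nat.lt_succ_iff.mp h))
      · rw [le_antisymm hkl h]
  obtain ⟨n, hn⟩ := IsArtinian.monotone_stabilizes
    (⟨fun n => OrderDual.toDual (Submodule.map p.mkQ (N n)),
     fun k l hkl => Submodule.map_mono (hNanti k l hkl)⟩ : ℕ →o (Submodule Sᵐᵒᵖ (S ⧸ p))ᵒᵈ)
  have heq : Submodule.map p.mkQ (N n) = Submodule.map p.mkQ (N (n + 1)) :=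
    hn (n + 1) (Nat.le_succ n)
  have heq2 : N n = N (n + 1) := by
    have := congrArg (Submodule.comap p.mkQ) heq
    rwa [Submodule.comap_map_mkQ, Submodule.comap_map_mkQ, sup_eq_right.mpr (hpN n),
      sup_eq_right.mpr (hpN (n + 1))] at this
  exact absurd heq2 (ne_of_gt (hlt n))
end

section
/- Let T be a ring and 𝒜 a multiplicatively closed right Ore subset of regular elements of T with 1 ∈ 𝒜, and let T𝒜^{-1} denote the right localization of T at 𝒜. If there exists a right T-module V such that the injective hull E_{T𝒜^{-1}}(V ⊗_T T𝒜^{-1}) is not locally Artinian as a T𝒜^{-1}-module, then the injective hull E_T(V/τ(V)) is not locally Artinian as a T-module, where τ(V) denotes the 𝒜-torsion submodule of V. -/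
/-!
STATEMENT 10: Let T be a ring and 𝒜 a multiplicatively closed right Ore subset of regular
elements of T with 1 ∈ 𝒜, and let T𝒜⁻¹ be the right localization of T at 𝒜. If there
exists a right T-module V such that E_{T𝒜⁻¹}(V ⊗_T T𝒜⁻¹) is not locally Artinian as a
T𝒜⁻¹-module, then E_T(V/τ(V)) is not locally Artinian, where τ(V) is the 𝒜-torsion
submodule of V.

Here the right localization T𝒜⁻¹ is axiomatized as a ring T' with a ring map φ : T → T'
which is injective, inverts 𝒜 and consists of right fractions; and V ⊗_T T𝒜⁻¹ is
axiomatized as a right T'-module W with a φ-semilinear map ψ : V → W through which W is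
a module of right fractions of V with kernel the 𝒜-torsion submodule.
-/

open MulOpposite

universe u

/-- The injective hull of the `A`-module `X` is locally Artinian: in every essential
extension of `X`, every finitely generated submodule is Artinian. -/
def HullIsLocallyArtinian (A : Type u) [Ring A] (X : Type u) [AddCommGroup X]
    [Module A X] : Prop :=
  ∀ (Y : Type u) [AddCommGroup Y] [Module A Y] (f : X →ₗ[A] Y), Function.Injective f →
    (∀ P : Submodule A Y, P ⊓ LinearMap.range f = ⊥ → P = ⊥) →
    ∀ M : Submodule A Y, M.FG → IsArtinian A M

theorem hull_not_locallyArtinian_of_localized_hull_not_locallyArtinian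
    {T T' : Type u} [Ring T] [Ring T'] (A : Submonoid T)
    -- 𝒜 consists of regular elements
    (hreg : ∀ a ∈ A, IsRegular a)
    -- 𝒜 is a right Ore set in T
    (hore : ∀ t : T, ∀ a ∈ A, ∃ t' : T, ∃ a' ∈ A, t * a' = a * t')
    -- T' = T𝒜⁻¹ is the right localization of T at 𝒜, via φ
    (φ : T →+* T') (hφinj : Function.Injective φ)
    (hφunit : ∀ a ∈ A, IsUnit (φ a))
    (hφfrac : ∀ x : T', ∃ t : T, ∃ a ∈ A, x * φ a = φ t)
    -- V a right T-module, W = V ⊗_T T𝒜⁻¹ a right T'-module, via the φ-semilinear map ψ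
    (V : Type u) [AddCommGroup V] [Module Tᵐᵒᵖ V]
    (W : Type u) [AddCommGroup W] [Module T'ᵐᵒᵖ W]
    (ψ : V →+ W)
    (hψsemilinear : ∀ (v : V) (t : T), ψ (op t • v) = op (φ t) • ψ v)
    (hψfrac : ∀ w : W, ∃ v : V, ∃ a ∈ A, op (φ a) • w = ψ v)
    (hψker : ∀ v : V, ψ v = 0 ↔ ∃ a ∈ A, op a • v = 0)
    -- τ is the 𝒜-torsion submodule of V
    (τ : Submodule Tᵐᵒᵖ V) (hτ : ∀ v : V, v ∈ τ ↔ ∃ a ∈ A, op a • v = 0)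
    -- hypothesis: E_{T𝒜⁻¹}(V ⊗_T T𝒜⁻¹) is not locally Artinian
    (hW : ¬ HullIsLocallyArtinian T'ᵐᵒᵖ W) :
    ¬ HullIsLocallyArtinian Tᵐᵒᵖ (V ⧸ τ) := by
  contrapose! hW
  intro Y _ _ f hfinj hfess M hMfg
  -- T-module structure on Y via φ
  letI instY : Module Tᵐᵒᵖ Y := Module.compHom Y (RingHom.op φ)
  have hsm : ∀ (t : T) (y : Y), (op t • y : Y) = op (φ t) • y := fun _ _ => rfl
  -- units are invertible on modules
  have unit_smul_zero : ∀ {X : Type u} [AddCommGroup X] [Module T'ᵐᵒᵖ X] {r : T'ᵐᵒᵖ}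
      (_ : IsUnit r) {x : X}, r • x = 0 → x = 0 := by
    intro X _ _ r hr x h
    obtain ⟨u, rfl⟩ := hr
    have h2 : u • x = (0 : X) := h
    have := congrArg (fun y : X => u⁻¹ • y) h2
    simpa using this
  -- the semilinear map V → Y is T-linear
  let ψ' : V →ₗ[Tᵐᵒᵖ] Y :=
    { toFun := fun v => f (ψ v)
      map_add' := fun v₁ v₂ => by simp
      map_smul' := fun c v => by
        show f (ψ (c • v)) = c • f (ψ v)
        have hc : c • v = op (unop c) • v := by rw [op_unop]
        rw [hc, hψsemilinear, map_smul]
        rfl }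
  have hψ'apply : ∀ v : V, ψ' v = f (ψ v) := fun _ => rfl
  have hker : LinearMap.ker ψ' = τ := by
    ext v
    rw [LinearMap.mem_ker, hτ]
    show f (ψ v) = 0 ↔ _
    rw [LinearMap.map_eq_zero_iff f hfinj, hψker]
  let g : (V ⧸ τ) →ₗ[Tᵐᵒᵖ] Y := τ.liftQ ψ' hker.ge
  have hginj : Function.Injective g :=
    LinearMap.ker_eq_bot.mp (Submodule.ker_liftQ_eq_bot τ ψ' hker.ge hker.le)
  have hgrange : ∀ v : V, f (ψ v) ∈ LinearMap.range g := fun v =>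
    ⟨Submodule.Quotient.mk v, Submodule.liftQ_apply τ ψ' v⟩
  -- essentiality of g
  have hgess : ∀ P : Submodule Tᵐᵒᵖ Y, P ⊓ LinearMap.range g = ⊥ → P = ⊥ := by
    intro P hP
    by_contra hPne
    obtain ⟨y, hyP, hy0⟩ := (Submodule.ne_bot_iff P).mp hPne
    have hspan : Submodule.span T'ᵐᵒᵖ {y} ⊓ LinearMap.range f ≠ ⊥ := by
      intro h
      have := hfess _ h
      rw [Submodule.span_singleton_eq_bot] at this
      exact hy0 this
    obtain ⟨z, hz, hz0⟩ := (Submodule.ne_bot_iff _).mp hspan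
    obtain ⟨hz1, hz2⟩ := Submodule.mem_inf.mp hz
    obtain ⟨c, hcz⟩ := Submodule.mem_span_singleton.mp hz1
    obtain ⟨w, hw⟩ := hz2
    obtain ⟨t, a', ha', hta'⟩ := hφfrac (unop c)
    obtain ⟨v, a, ha, hva⟩ := hψfrac (op (φ a') • w)
    have hw0 : w ≠ 0 := by rintro rfl; rw [map_zero] at hw; exact hz0 hw.symm
    have hψv0 : ψ v ≠ 0 := by
      rw [← hva]
      intro h
      exact hw0 (unit_smul_zero (hφunit a' ha').op
        (unit_smul_zero (hφunit a ha).op h))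
    have hprod : (op (φ a) * (op (φ a') * op (unop c)) : T'ᵐᵒᵖ) = op (φ (t * a)) := by
      rw [← op_mul, hta', ← op_mul, ← map_mul]
    have key : f (ψ v) = op (t * a) • y := by
      have h1 : f (ψ v) = (op (φ a) * (op (φ a') * op (unop c))) • y := by
        rw [← hva, map_smul, map_smul, hw, ← hcz, op_unop, mul_smul, mul_smul]
      rw [h1, hprod]
      rfl
    have hy₀P : op (t * a) • y ∈ P := P.smul_mem _ hyP
    have hy₀r : op (t * a) • y ∈ LinearMap.range g := key ▸ hgrange v
    have hy₀0 : op (t * a) • y ≠ 0 := by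
      rw [← key]
      intro h
      exact hψv0 (LinearMap.map_eq_zero_iff f hfinj |>.mp h)
    have : op (t * a) • y ∈ P ⊓ LinearMap.range g := ⟨hy₀P, hy₀r⟩
    rw [hP] at this
    exact hy₀0 this
  -- the finitely generated T-submodule M₀
  obtain ⟨s, hs⟩ := hMfg
  set M₀ : Submodule Tᵐᵒᵖ Y := Submodule.span Tᵐᵒᵖ (s : Set Y) with hM₀
  have hM₀fg : M₀.FG := ⟨s, rfl⟩
  haveI hart : IsArtinian Tᵐᵒᵖ M₀ := hW Y g hginj hgess M₀ hM₀fg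
  -- common denominators: every element of M lands in M₀ after clearing a denominator
  have hden : ∀ y ∈ M, ∃ a ∈ A, op (φ a) • y ∈ M₀ := by
    intro y hy
    rw [← hs] at hy
    induction hy using Submodule.span_induction with
    | mem x hx =>
      refine ⟨1, A.one_mem, ?_⟩
      rw [map_one, op_one, one_smul]
      exact Submodule.subset_span hx
    | zero =>
      exact ⟨1, A.one_mem, by rw [smul_zero]; exact M₀.zero_mem⟩
    | add x y hx hy ihx ihy =>
      obtain ⟨a, ha, hxa⟩ := ihx
      obtain ⟨b, hb, hyb⟩ := ihy
      obtain ⟨t', b', hb', habt⟩ := hore a b hb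
      refine ⟨a * b', A.mul_mem ha hb', ?_⟩
      have h1 : op (φ (a * b')) • x ∈ M₀ := by
        rw [map_mul, op_mul, mul_smul]
        exact M₀.smul_mem (op b') hxa
      have h2 : op (φ (a * b')) • y ∈ M₀ := by
        rw [habt, map_mul, op_mul, mul_smul]
        exact M₀.smul_mem (op t') hyb
      rw [smul_add]
      exact M₀.add_mem h1 h2
    | smul c x hx ih =>
      obtain ⟨a, ha, hxa⟩ := ih
      obtain ⟨r, d, hd, hcd⟩ := hφfrac (unop c)
      obtain ⟨s', a'', ha'', hsa⟩ := hore r a ha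
      refine ⟨d * a'', A.mul_mem hd ha'', ?_⟩
      have hprod2 : (op (φ (d * a'')) * c : T'ᵐᵒᵖ) = op (φ s') * op (φ a) := by
        have hh : unop c * φ (d * a'') = φ a * φ s' := by
          rw [map_mul, ← mul_assoc, hcd, ← map_mul, hsa, map_mul]
        rw [← op_unop c, ← op_mul, hh, op_mul]
      rw [smul_smul, hprod2, mul_smul]
      exact M₀.smul_mem (op s') hxa
  -- restriction of scalars on submodules of Y
  let res : Submodule T'ᵐᵒᵖ Y → Submodule Tᵐᵒᵖ Y := fun N =>
    { carrier := N
      add_mem' := fun h1 h2 => N.add_mem h1 h2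
      zero_mem' := N.zero_mem
      smul_mem' := fun c y hy => N.smul_mem (op (φ (unop c))) hy }
  let F : Submodule T'ᵐᵒᵖ ↥M → Submodule Tᵐᵒᵖ ↥M₀ :=
    fun N => (res (N.map M.subtype)).comap M₀.subtype
  have hFmem : ∀ (N : Submodule T'ᵐᵒᵖ ↥M) (x : ↥M₀),
      x ∈ F N ↔ (x : Y) ∈ N.map M.subtype := fun _ _ => Iff.rfl
  have hFmono : ∀ {N₁ N₂ : Submodule T'ᵐᵒᵖ ↥M}, N₁ ≤ N₂ → F N₁ ≤ F N₂ := by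
    intro N₁ N₂ h x hx
    rw [hFmem] at hx ⊢
    exact Submodule.map_mono h hx
  have hF : StrictMono F := by
    intro N₁ N₂ hlt
    refine lt_of_le_of_ne (hFmono hlt.le) ?_
    intro heq
    apply hlt.ne
    refine le_antisymm hlt.le ?_
    intro n hn
    obtain ⟨a, ha, hmem⟩ := hden (↑n) n.2
    have h2 : (op (φ a) • n : ↥M) ∈ N₂ := N₂.smul_mem _ hn
    have h3 : (⟨op (φ a) • (n : Y), hmem⟩ : ↥M₀) ∈ F N₂ := by
      rw [hFmem]
      exact Submodule.mem_map.mpr ⟨op (φ a) • n, h2, rfl⟩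
    rw [← heq, hFmem] at h3
    obtain ⟨m, hmN₁, hm⟩ := Submodule.mem_map.mp h3
    have h4 : (op (φ a) • n : ↥M) ∈ N₁ := by
      have hme : m = op (φ a) • n := Subtype.ext hm
      rwa [hme] at hmN₁
    obtain ⟨u, hu⟩ := (hφunit a ha).op
    have h6 : ((↑u⁻¹ : T'ᵐᵒᵖ) • (op (φ a) • n) : ↥M) = n := by
      rw [← hu, smul_smul, Units.inv_mul, one_smul]
    have h7 := N₁.smul_mem (↑u⁻¹ : T'ᵐᵒᵖ) h4
    rwa [h6] at h7
  haveI : WellFoundedLT (Submodule Tᵐᵒᵖ ↥M₀) := hart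
  exact hF.wellFoundedLT
end

section
/- Let R be a commutative Noetherian domain which is an algebra over an uncountable field but is not itself a field. Suppose there exists a countable multiplicatively closed subset 𝒜 of R∖{0} such that the localization R𝒜^{-1} equals the field of fractions of R. Then R has Krull dimension 1 and the prime spectrum Spec(R) is countable. -/
-- countable avoidance: finset step
lemma claim_step {k R : Type*} [Field k] [CommRing R] [Algebra k R] (hk : ¬ Countable k)
    (p : ℕ → Ideal R) (I : Ideal R) (hcov : ∀ x ∈ I, ∃ n, x ∈ p n) (s : Finset R)
    (hs : (s : Set R) ⊆ I) : ∀ x ∈ I, ∃ n, x ∈ p n ∧ ∀ y ∈ s, y ∈ p n := by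
  classical
  induction s using Finset.induction_on with
  | empty => intro x hx; obtain ⟨n, hn⟩ := hcov x hx; exact ⟨n, hn, by simp⟩
  | @insert a s ha ih =>
    intro x hx
    have haI : a ∈ I := hs (Finset.mem_insert_self a s)
    have hsI : (s : Set R) ⊆ I := fun y hy => hs (Finset.mem_insert_of_mem hy)
    -- for each λ : k, apply ih to x + λ • a
    have key : ∀ lam : k, ∃ n, (x + lam • a) ∈ p n ∧ ∀ y ∈ s, y ∈ p n := by
      intro lam
      refine ih hsI (x + lam • a) (I.add_mem hx ?_)
      rw [Algebra.smul_def]; exact I.mul_mem_left _ haI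
    choose f hf1 hf2 using key
    -- f is not injective
    have : ∃ lam mu : k, lam ≠ mu ∧ f lam = f mu := by
      by_contra h
      push_neg at h
      have : Function.Injective f := fun lam mu hfm => by
        by_contra hne; exact (h lam mu hne) hfm
      exact hk (Function.Injective.countable this)
    obtain ⟨lam, mu, hne, hfe⟩ := this
    set n := f lam with hn
    have h1 : (x + lam • a) ∈ p n := hf1 lam
    have h2 : (x + mu • a) ∈ p n := hfe ▸ hf1 mu
    have hdiff : (lam - mu) • a ∈ p n := by
      have := (p n).sub_mem h1 h2
      simpa [sub_smul] using this
    have haP : a ∈ p n := by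
      have : (lam - mu)⁻¹ • ((lam - mu) • a) ∈ p n := by
        rw [Algebra.smul_def]; exact (p n).mul_mem_left _ hdiff
      rwa [smul_smul, inv_mul_cancel₀ (sub_ne_zero.mpr hne), one_smul] at this
    have hxP : x ∈ p n := by
      have := (p n).sub_mem h1 (by rw [Algebra.smul_def]; exact (p n).mul_mem_left _ haP :
        lam • a ∈ p n)
      simpa using this
    exact ⟨n, hxP, fun y hy => by
      rcases Finset.mem_insert.mp hy with h | h
      · exact h ▸ haP
      · exact hf2 lam y h⟩

lemma countable_avoidance {k R : Type*} [Field k] [CommRing R] [Algebra k R]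
    (hk : ¬ Countable k) [IsNoetherianRing R]
    (p : ℕ → Ideal R) (I : Ideal R) (hp : ∀ n, ¬ I ≤ p n) :
    ∃ x ∈ I, ∀ n, x ∉ p n := by
  by_contra h
  push_neg at h
  have hcov : ∀ x ∈ I, ∃ n, x ∈ p n := h
  obtain ⟨s, hs⟩ := (isNoetherian_def.mp ‹IsNoetherianRing R› I)
  have hsI : (s : Set R) ⊆ I := by rw [← hs]; exact Submodule.subset_span
  obtain ⟨n, -, hsn⟩ := claim_step hk p I hcov s hsI 0 I.zero_mem
  refine hp n ?_
  rw [← hs, Submodule.span_le]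
  exact fun y hy => hsn y hy

lemma isArtinian_of_torsionBySet {Q : Type*} [CommRing Q] (I : Ideal Q) {V : Type*}
    [AddCommGroup V] [Module Q V] (hT : Module.IsTorsionBySet Q V I)
    (hArt : letI := hT.module; IsArtinian (Q ⧸ I) V) : IsArtinian Q V := by
  letI := hT.module
  let f : Submodule Q V → Submodule (Q ⧸ I) V := fun N =>
    { carrier := N
      add_mem' := fun h1 h2 => N.add_mem h1 h2
      zero_mem' := N.zero_mem
      smul_mem' := by
        rintro c v hv
        obtain ⟨a, rfl⟩ := Ideal.Quotient.mk_surjective c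
        rw [hT.mk_smul]
        exact N.smul_mem a hv }
  have hf : ∀ {N N' : Submodule Q V}, N < N' → f N < f N' := by
    intro N N' h
    rw [SetLike.lt_iff_le_and_exists] at h ⊢
    exact ⟨h.1, h.2⟩
  exact ⟨Subrelation.wf hf (InvImage.wf f hArt.wf)⟩

lemma artinian_step {Q : Type*} [CommRing Q] [IsNoetherianRing Q] {m : Ideal Q}
    (hm : m.IsMaximal) (i : ℕ) (hj : IsArtinian Q (↥(m ^ (i + 1) : Ideal Q))) :
    IsArtinian Q (↥(m ^ i : Ideal Q)) := by
  have hle : (m ^ (i + 1) : Ideal Q) ≤ m ^ i := Ideal.pow_le_pow_right (Nat.le_succ i)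
  let Mi : Submodule Q Q := (m ^ i : Ideal Q)
  let Ni : Submodule Q ↥Mi := Submodule.comap Mi.subtype (m ^ (i + 1) : Ideal Q)
  have hT : Module.IsTorsionBySet Q (↥Mi ⧸ Ni) ↑m := by
    rw [Module.isTorsionBySet_quotient_iff]
    rintro x r hr
    show r • (x : Q) ∈ (m ^ (i + 1) : Ideal Q)
    rw [smul_eq_mul, pow_succ']
    exact Ideal.mul_mem_mul hr x.2
  letI := hT.module
  letI : Field (Q ⧸ m) := Ideal.Quotient.field m
  have hfin : Module.Finite Q ↥Mi := Module.Finite.iff_fg.mpr (IsNoetherian.noetherian _)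
  have hfinV : Module.Finite Q (↥Mi ⧸ Ni) := Module.Finite.quotient Q Ni
  have hfinF : Module.Finite (Q ⧸ m) (↥Mi ⧸ Ni) :=
    Module.Finite.of_restrictScalars_finite Q _ _
  have hA : IsArtinian (Q ⧸ m) (↥Mi ⧸ Ni) := isArtinian_of_fg_of_artinian'
  have hAV : IsArtinian Q (↥Mi ⧸ Ni) := isArtinian_of_torsionBySet m hT hA
  haveI := hj
  exact isArtinian_of_range_eq_ker (Submodule.inclusion hle) Ni.mkQ
    (by rw [Submodule.range_inclusion, Submodule.ker_mkQ])

lemma isArtinianRing_of_unique_prime {Q : Type*} [CommRing Q] [IsNoetherianRing Q] (m : Ideal Q)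
    (hm : m.IsMaximal) (huniq : ∀ P : Ideal Q, P.IsPrime → P = m) : IsArtinianRing Q := by
  have hnil : nilradical Q = m := by
    rw [nilradical_eq_sInf]
    exact le_antisymm (sInf_le hm.isPrime) (le_sInf fun J hJ => (huniq J hJ).ge)
  obtain ⟨N, hN⟩ := IsNoetherianRing.isNilpotent_nilradical Q
  rw [hnil] at hN
  have key : ∀ j : ℕ, IsArtinian Q (↥(m ^ (N - j) : Ideal Q)) := by
    intro j
    induction j with
    | zero =>
      have : (m ^ (N - 0) : Ideal Q) = ⊥ := by simpa using hN
      rw [this]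
      infer_instance
    | succ j ih =>
      rcases le_or_gt N j with h | h
      · have : N - (j + 1) = N - j := by omega
        rwa [this]
      · have : N - j = (N - (j + 1)) + 1 := by omega
        rw [this] at ih
        exact artinian_step hm _ ih
  have htop : IsArtinian Q (↥(m ^ (N - N) : Ideal Q)) := key N
  have h0 : (m ^ (N - N) : Ideal Q) = ⊤ := by simp
  rw [h0] at htop
  exact isArtinian_of_linearEquiv (Submodule.topEquiv (R := Q) (M := Q))

open IsLocalRing in
lemma pit_local {S : Type*} [CommRing S] [IsDomain S] [IsNoetherianRing S] [IsLocalRing S]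
    {x : S} (hx : maximalIdeal S ∈ (Ideal.span {x}).minimalPrimes)
    {q : Ideal S} (hq : q.IsPrime) (hlt : q < maximalIdeal S) : q = ⊥ := by
  set m := maximalIdeal S with hm
  -- x ∉ q
  have hxq : x ∉ q := by
    intro h
    have h1 : q ∈ {J : Ideal S | J.IsPrime ∧ Ideal.span {x} ≤ J} :=
      ⟨hq, by rwa [Ideal.span_le, Set.singleton_subset_iff]⟩
    exact hlt.ne (le_antisymm hlt.le (hx.2 h1 hlt.le))
  -- quotient ring
  set Q := S ⧸ Ideal.span {x} with hQdef
  have hspan_le : Ideal.span {x} ≤ m := hx.1.2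
  have hspan_ne : Ideal.span {x} ≠ ⊤ := fun h => (maximalIdeal.isMaximal S).ne_top
    (top_le_iff.mp (h ▸ hspan_le))
  haveI : Nontrivial Q := Ideal.Quotient.nontrivial_iff.mpr hspan_ne
  set π := Ideal.Quotient.mk (Ideal.span {x}) with hπ
  have hsurj : Function.Surjective π := Ideal.Quotient.mk_surjective
  have huniq : ∀ P : Ideal Q, P.IsPrime → P = m.map π := by
    intro P hP
    have hcp : (P.comap π).IsPrime := hP.comap π
    have hker : Ideal.span {x} ≤ P.comap π := by
      intro y hy
      rw [Ideal.mem_comap]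
      have hy0 : π y = 0 := Ideal.Quotient.eq_zero_iff_mem.mpr hy
      rw [hy0]
      exact P.zero_mem
    have hle : P.comap π ≤ m := le_maximalIdeal hcp.ne_top
    have : m ≤ P.comap π := hx.2 ⟨hcp, hker⟩ hle
    have hEq : P.comap π = m := le_antisymm hle this
    rw [← Ideal.map_comap_of_surjective π hsurj P, hEq]
  -- m.map π is maximal
  obtain ⟨M, hM, -⟩ := Ideal.exists_le_maximal (⊥ : Ideal Q) bot_ne_top
  have hMeq : M = m.map π := huniq M hM.isPrime
  have hmax : (m.map π).IsMaximal := hMeq ▸ hM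
  haveI : IsArtinianRing Q := isArtinianRing_of_unique_prime (m.map π) hmax huniq
  -- localization at q
  set T := Localization.AtPrime q with hT
  haveI : IsDomain T := IsLocalization.isDomain_localization q.primeCompl_le_nonZeroDivisors
  haveI : IsNoetherianRing T := IsLocalization.isNoetherianRing q.primeCompl T inferInstance
  set g := algebraMap S T with hg
  have hginj : Function.Injective g := IsLocalization.injective T q.primeCompl_le_nonZeroDivisors
  set K := q.map g with hK
  have hKmax : K = maximalIdeal T := Localization.AtPrime.map_eq_maximalIdeal
  set In : ℕ → Ideal S := fun n => (K ^ n).comap g with hIn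
  have hanti : ∀ {a b : ℕ}, a ≤ b → In b ≤ In a :=
    fun hab => Ideal.comap_mono (Ideal.pow_le_pow_right hab)
  -- stabilization of images in Q
  set J : ℕ →o (Ideal Q)ᵒᵈ :=
    ⟨fun n => (In n).map π, fun a b hab => Ideal.map_mono (hanti hab)⟩ with hJ
  obtain ⟨n₁, hn₁⟩ := IsArtinian.monotone_stabilizes (R := Q) (M := Q) J
  -- In stabilizes from n₁ on
  have hstep : ∀ n, n₁ ≤ n → In n = In (n + 1) := by
    intro n hn
    refine le_antisymm ?_ (hanti (Nat.le_succ n))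
    -- Nakayama
    have hmap_eq : (In n).map π = (In (n + 1)).map π := by
      have h1 := hn₁ n hn
      have h2 := hn₁ (n + 1) (hn.trans (Nat.le_succ n))
      show J n = J (n + 1)
      rw [← h1, ← h2]
    have hsub : In n ≤ In (n + 1) ⊔ Ideal.span {x} * In n := by
      intro a ha
      have : π a ∈ (In (n + 1)).map π := hmap_eq ▸ Ideal.mem_map_of_mem π ha
      obtain ⟨b, hb, hba⟩ := (Ideal.mem_map_iff_of_surjective π hsurj).mp this
      have hdiff : a - b ∈ Ideal.span {x} := by
        rw [← Ideal.mk_ker (I := Ideal.span {x}), RingHom.mem_ker, map_sub, hba, sub_self]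
      obtain ⟨c, hc⟩ := Ideal.mem_span_singleton'.mp hdiff
      -- c ∈ In n
      have hcx : c * x ∈ In n := hc ▸ (In n).sub_mem ha (hanti (Nat.le_succ n) hb)
      have hxu : IsUnit (g x) := IsLocalization.map_units T (⟨x, hxq⟩ : q.primeCompl)
      have hcIn : c ∈ In n := by
        have hgc : g c * g x ∈ K ^ n := by rw [← map_mul]; exact hcx
        obtain ⟨u, hu⟩ := hxu
        have : g c = g c * g x * ↑u⁻¹ := by rw [← hu, mul_assoc, u.mul_inv, mul_one]
        rw [hIn]; simp only [Ideal.mem_comap]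
        rw [this]
        exact Ideal.mul_mem_right _ _ hgc
      have ha' : a = b + x * c := by rw [mul_comm x c, hc]; ring
      rw [ha']
      exact Submodule.add_mem_sup hb (Ideal.mul_mem_mul (Ideal.mem_span_singleton_self x) hcIn)
    -- Nakayama in S ⧸ In (n+1)
    have hjac : Ideal.span {x} ≤ Ideal.jacobson ⊥ := by
      rw [IsLocalRing.jacobson_eq_maximalIdeal ⊥ bot_ne_top]
      exact hspan_le
    set mkq := (In (n + 1) : Submodule S S).mkQ with hmkq
    have hmap_bot : Submodule.map mkq (In (n + 1) : Submodule S S) = ⊥ := by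
      rw [← le_bot_iff, Submodule.map_le_iff_le_comap]
      intro a ha
      simp only [Submodule.mem_comap, Submodule.mem_bot, hmkq, Submodule.mkQ_apply,
        Submodule.Quotient.mk_eq_zero]
      exact ha
    have hNle : Submodule.map mkq (In n : Submodule S S) ≤
        (Ideal.span {x}) • Submodule.map mkq (In n : Submodule S S) := by
      have h2 := Submodule.map_mono (f := mkq) (hsub : (In n : Submodule S S) ≤ _)
      rw [Submodule.map_sup] at h2
      have h3 : (Ideal.span {x} * In n : Ideal S) = (Ideal.span {x}) • (In n : Submodule S S) :=
        rfl
      rw [h3, Submodule.map_smul'', hmap_bot, bot_sup_eq] at h2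
      exact h2
    have hbot := Submodule.eq_bot_of_le_smul_of_le_jacobson_bot (Ideal.span {x})
      (Submodule.map mkq (In n : Submodule S S)) (IsNoetherian.noetherian _) hNle hjac
    intro a ha
    have : mkq a ∈ Submodule.map mkq (In n : Submodule S S) := Submodule.mem_map_of_mem ha
    rw [hbot, Submodule.mem_bot, hmkq, Submodule.mkQ_apply, Submodule.Quotient.mk_eq_zero] at this
    exact this
  -- In stabilizes
  have hstab : ∀ n, n₁ ≤ n → In n₁ = In n := by
    intro n hn
    induction n, hn using Nat.le_induction with
    | base => rfl
    | succ n hn ih => rw [ih, ← hstep n hn]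
  set N₀ := n₁ + 1 with hN₀
  have hq_pow : ∀ n : ℕ, q ^ n ≤ In n := by
    intro n
    have h1 : q ^ n ≤ (Ideal.map g (q ^ n)).comap g := Ideal.le_comap_map
    rwa [Ideal.map_pow] at h1
  have hIN : In N₀ = In (2 * N₀) := by
    rw [← hstab N₀ (by omega), ← hstab (2 * N₀) (by omega)]
  have hKle : K ^ N₀ ≤ K ^ (2 * N₀) := by
    have h1 : q ^ N₀ ≤ In (2 * N₀) := (hq_pow N₀).trans hIN.le
    have h2 : Ideal.map g (q ^ N₀) ≤ K ^ (2 * N₀) :=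
      (Ideal.map_mono h1).trans (Ideal.map_comap_le)
    rwa [Ideal.map_pow] at h2
  have hsmul : K ^ N₀ ≤ K • (K ^ N₀ : Ideal T) := by
    have h1 : K ^ (2 * N₀) ≤ K * K ^ N₀ := by
      rw [two_mul, pow_add]
      exact Ideal.mul_mono (Ideal.pow_le_self (by omega)) le_rfl
    exact le_trans hKle (le_trans h1 (le_of_eq rfl))
  have hjacT : K ≤ Ideal.jacobson (⊥ : Ideal T) := by
    rw [IsLocalRing.jacobson_eq_maximalIdeal ⊥ bot_ne_top]
    exact hKmax.le
  have hKbot : (K ^ N₀ : Ideal T) = ⊥ :=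
    Submodule.eq_bot_of_le_smul_of_le_jacobson_bot K (K ^ N₀ : Ideal T)
      (IsNoetherian.noetherian _) hsmul hjacT
  rw [eq_bot_iff]
  intro y hy
  rw [Submodule.mem_bot]
  have h1 : g y ∈ K := Ideal.mem_map_of_mem g hy
  have h2 : (g y) ^ N₀ ∈ (K ^ N₀ : Ideal T) := Ideal.pow_mem_pow h1 N₀
  rw [hKbot, Submodule.mem_bot] at h2
  have h3 : g y = 0 := pow_eq_zero_iff (by omega) |>.mp h2
  have := hginj (h3.trans (map_zero g).symm)
  exact this

open IsLocalRing in
lemma pit_domain {R : Type*} [CommRing R] [IsDomain R] [IsNoetherianRing R] {x : R}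
    {p : Ideal R} (hp : p ∈ (Ideal.span {x}).minimalPrimes) {q : Ideal R} (hq : q.IsPrime)
    (hlt : q < p) : q = ⊥ := by
  haveI hpp : p.IsPrime := hp.1.1
  set S := Localization.AtPrime p with hS
  haveI : IsDomain S := IsLocalization.isDomain_localization p.primeCompl_le_nonZeroDivisors
  haveI : IsNoetherianRing S := IsLocalization.isNoetherianRing p.primeCompl S inferInstance
  set g := algebraMap R S with hg
  have hginj : Function.Injective g := IsLocalization.injective S p.primeCompl_le_nonZeroDivisors
  have hmEq : p.map g = maximalIdeal S := Localization.AtPrime.map_eq_maximalIdeal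
  have hcm : (maximalIdeal S).comap g = p := Localization.AtPrime.comap_maximalIdeal
  -- maximalIdeal S is minimal over span {g x}
  have hmin : maximalIdeal S ∈ (Ideal.span {g x}).minimalPrimes := by
    constructor
    · refine ⟨(maximalIdeal.isMaximal S).isPrime, ?_⟩
      rw [Ideal.span_le, Set.singleton_subset_iff]
      rw [← hmEq]
      exact Ideal.mem_map_of_mem g (hp.1.2 (Ideal.mem_span_singleton_self x))
    · rintro b ⟨hbp, hbx⟩ hbm
      have hcb : (b.comap g).IsPrime := hbp.comap g
      have hxb : x ∈ b.comap g := by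
        rw [Ideal.mem_comap]
        exact hbx (Ideal.mem_span_singleton_self (g x))
      have hble : b.comap g ≤ p := le_trans (Ideal.comap_mono hbm) (le_of_eq hcm)
      have hpb : p ≤ b.comap g := hp.2 ⟨hcb, by
        rwa [Ideal.span_le, Set.singleton_subset_iff]⟩ hble
      calc maximalIdeal S = p.map g := hmEq.symm
        _ ≤ (b.comap g).map g := Ideal.map_mono hpb
        _ ≤ b := Ideal.map_comap_le
  -- q maps to a prime strictly below the maximal ideal
  have hdisj : Disjoint (p.primeCompl : Set R) (q : Set R) := by
    rw [Set.disjoint_iff]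
    rintro y ⟨hy1, hy2⟩
    exact hy1 (hlt.le hy2)
  haveI hq' : (q.map g).IsPrime :=
    IsLocalization.isPrime_of_isPrime_disjoint p.primeCompl S q hq hdisj
  have hcq : (q.map g).comap g = q :=
    IsLocalization.comap_map_of_isPrime_disjoint p.primeCompl S hq hdisj
  have hqlt : q.map g < maximalIdeal S := by
    refine lt_of_le_of_ne (hmEq ▸ Ideal.map_mono hlt.le) ?_
    intro hEq
    have := congrArg (Ideal.comap g) hEq
    rw [hcq, hcm] at this
    exact hlt.ne this
  have hbot := pit_local hmin hq' hqlt
  have := congrArg (Ideal.comap g) hbot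
  rw [hcq] at this
  rw [this]
  rw [eq_bot_iff]
  intro y hy
  rw [Ideal.mem_comap] at hy
  rw [Submodule.mem_bot]
  exact hginj (by rw [map_zero]; exact (Submodule.mem_bot S).mp hy)

/-!
STATEMENT 11: Let R be a commutative Noetherian domain which is an algebra over an
uncountable field but is not itself a field. Suppose there exists a countable
multiplicatively closed subset 𝒜 of R∖{0} such that the localization R𝒜⁻¹ is the field
of fractions of R. Then R has Krull dimension 1 and Spec(R) is countable.
-/

theorem krullDim_one_of_countable_localization_fractionField
    {R : Type*} [CommRing R] [IsDomain R] [IsNoetherianRing R]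
    (k : Type*) [Field k] [Algebra k R] (hk : ¬ Countable k)
    (hnf : ¬ IsField R)
    (A : Submonoid R) (hA0 : (0 : R) ∉ A) (hAcount : (A : Set R).Countable)
    -- the localization of R at 𝒜 is the whole field of fractions of R
    (hAfrac : IsFractionRing R (Localization A)) :
    ringKrullDim R = 1 ∧ Countable (PrimeSpectrum R) := by
  classical
  haveI := hAfrac
  set K := Localization A with hKdef
  have hinj : Function.Injective (algebraMap R K) := IsFractionRing.injective R K
  -- Step 1: every nonzero prime meets A
  have hmeet : ∀ P : Ideal R, P.IsPrime → P ≠ ⊥ → ∃ a ∈ (A : Set R), a ∈ P := by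
    intro P hP hP0
    obtain ⟨y, hyP, hy0⟩ := SetLike.not_le_iff_exists.mp (fun h => hP0 (le_bot_iff.mp h))
    have hy0' : y ≠ 0 := by simpa using hy0
    have hu : IsUnit (algebraMap R K y) :=
      IsLocalization.map_units K (⟨y, mem_nonZeroDivisors_of_ne_zero hy0'⟩ : nonZeroDivisors R)
    obtain ⟨⟨r, a⟩, hra⟩ := IsLocalization.surj (M := A) (S := K) ((hu.unit⁻¹ : Kˣ) : K)
    have key : algebraMap R K (y * r) = algebraMap R K (a : R) := by
      rw [map_mul]
      calc algebraMap R K y * algebraMap R K r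
          = (hu.unit : K) * algebraMap R K r := by rw [IsUnit.unit_spec]
        _ = (hu.unit : K) * ((hu.unit⁻¹ : Kˣ) * algebraMap R K (a : R)) := by rw [hra]
        _ = algebraMap R K (a : R) := by rw [← mul_assoc, Units.mul_inv, one_mul]
    have hyr : y * r = (a : R) := hinj key
    exact ⟨(a : R), a.2, hyr ▸ P.mul_mem_right r hyP⟩
  -- the countable set T of candidate primes
  set T : Set (Ideal R) := ⋃ a ∈ (A : Set R), (Ideal.span {a}).minimalPrimes with hT
  have hTfin : ∀ I : Ideal R, I.minimalPrimes.Finite := by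
    intro I
    rw [Ideal.minimalPrimes_eq_comap]
    exact (minimalPrimes.finite_of_isNoetherianRing (R ⧸ I)).image _
  have hTcount : T.Countable := hAcount.biUnion fun a _ => (hTfin _).countable
  have hTmem : ∀ r ∈ T, r.IsPrime ∧ r ≠ ⊥ := by
    intro r hr
    rw [hT, Set.mem_iUnion₂] at hr
    obtain ⟨a, ha, hmin⟩ := hr
    refine ⟨hmin.1.1, ?_⟩
    intro hbot
    have : a ∈ r := hmin.1.2 (Ideal.mem_span_singleton_self a)
    rw [hbot, Submodule.mem_bot] at this
    exact hA0 (this ▸ ha)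
  have hcontain : ∀ P : Ideal R, P.IsPrime → P ≠ ⊥ → ∃ t ∈ T, t ≤ P := by
    intro P hP hP0
    obtain ⟨a, haA, haP⟩ := hmeet P hP hP0
    haveI := hP
    obtain ⟨t, ht, htP⟩ := Ideal.exists_minimalPrimes_le
      ((Ideal.span_le.mpr (Set.singleton_subset_iff.mpr haP)) : Ideal.span {a} ≤ P)
    exact ⟨t, by rw [hT, Set.mem_iUnion₂]; exact ⟨a, haA, ht⟩, htP⟩
  -- key lemma: all primes strictly below a nonzero prime are zero
  have L : ∀ P : Ideal R, P.IsPrime → P ≠ ⊥ → ∀ q : Ideal R, q.IsPrime → q < P → q = ⊥ := by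
    intro P hP hP0 q hq hqP
    set C : Set (Ideal R) := insert ⊥ {t ∈ T | t < P} with hC
    have hCc : C.Countable := (hTcount.mono (Set.sep_subset _ _)).insert ⊥
    obtain ⟨f, hf⟩ := hCc.exists_eq_range ⟨⊥, Set.mem_insert _ _⟩
    have hfP : ∀ n, ¬ P ≤ f n := by
      intro n hle
      have hfn : f n ∈ C := hf ▸ Set.mem_range_self n
      rw [hC] at hfn
      rcases hfn with h | ⟨-, hlt⟩
      · exact hP0 (le_bot_iff.mp (h ▸ hle))
      · exact hlt.ne (le_antisymm hlt.le hle)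
    obtain ⟨x, hxP, hxf⟩ := countable_avoidance (k := k) hk f P hfP
    have hx0 : x ≠ 0 := by
      have : (⊥ : Ideal R) ∈ Set.range f := hf ▸ Set.mem_insert _ _
      obtain ⟨n, hn⟩ := this
      intro h
      exact hxf n (by rw [hn, h]; exact Submodule.zero_mem ⊥)
    haveI := hP
    obtain ⟨r, hrmin, hrP⟩ := Ideal.exists_minimalPrimes_le
      ((Ideal.span_le.mpr (Set.singleton_subset_iff.mpr hxP)) : Ideal.span {x} ≤ P)
    have hrprime : r.IsPrime := hrmin.1.1
    have hxr : x ∈ r := hrmin.1.2 (Ideal.mem_span_singleton_self x)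
    have hr0 : r ≠ ⊥ := fun h => hx0 (by rw [h, Submodule.mem_bot] at hxr; exact hxr)
    -- r = P
    have hrPeq : r = P := by
      by_contra hne
      have hrltP : r < P := lt_of_le_of_ne hrP hne
      -- then r ∈ T
      obtain ⟨t, htT, htr⟩ := hcontain r hrprime hr0
      have htreq : t = r := by
        rcases lt_or_eq_of_le htr with hlt | h
        · exact absurd (pit_domain hrmin (hTmem t htT).1 hlt) (hTmem t htT).2
        · exact h
      have hrC : r ∈ C := by
        rw [hC]
        exact Set.mem_insert_of_mem _ ⟨htreq ▸ htT, hrltP⟩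
      rw [hf] at hrC
      obtain ⟨n, hn⟩ := hrC
      exact hxf n (hn ▸ hxr)
    exact pit_domain (hrPeq ▸ hrmin) hq hqP
  -- Spec is countable
  have hSpec : Countable (PrimeSpectrum R) := by
    set C : Set (Ideal R) := insert ⊥ T with hC
    have hCc : C.Countable := hTcount.insert ⊥
    haveI := hCc.to_subtype
    have : ∀ P : PrimeSpectrum R, P.asIdeal ∈ C := by
      intro P
      rcases eq_or_ne P.asIdeal ⊥ with h | h
      · rw [hC, h]; exact Set.mem_insert _ _
      · obtain ⟨t, htT, htP⟩ := hcontain P.asIdeal P.2 h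
        rcases lt_or_eq_of_le htP with hlt | heq
        · exact absurd (L P.asIdeal P.2 h t (hTmem t htT).1 hlt) (hTmem t htT).2
        · rw [heq] at htT
          rw [hC]
          exact Set.mem_insert_of_mem _ htT
    have hinj2 : Function.Injective (fun P : PrimeSpectrum R => (⟨P.asIdeal, this P⟩ : C)) := by
      intro P Q h
      ext1
      exact congrArg Subtype.val h
    exact hinj2.countable
  refine ⟨?_, hSpec⟩
  rw [ringKrullDim]
  apply le_antisymm
  · apply iSup_le
    intro c
    have hlen : c.length ≤ 1 := by
      by_contra hlen
      push_neg at hlen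
      have h2 : 2 ≤ c.length := hlen
      have h01 : c ⟨0, by omega⟩ < c ⟨1, by omega⟩ :=
        c.strictMono (Fin.mk_lt_mk.mpr (by omega))
      have h12 : c ⟨1, by omega⟩ < c ⟨2, by omega⟩ :=
        c.strictMono (Fin.mk_lt_mk.mpr (by omega))
      have hq1 : (c ⟨1, by omega⟩).asIdeal < (c ⟨2, by omega⟩).asIdeal := h12
      have hq0 : (c ⟨0, by omega⟩).asIdeal < (c ⟨1, by omega⟩).asIdeal := h01
      have hP0 : (c ⟨2, by omega⟩).asIdeal ≠ ⊥ := by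
        intro h
        rw [h] at hq1
        exact absurd (lt_of_le_of_lt bot_le hq1 : (⊥ : Ideal R) < ⊥) (lt_irrefl _)
      have hmid := L (c ⟨2, by omega⟩).asIdeal (c ⟨2, by omega⟩).2 hP0
        (c ⟨1, by omega⟩).asIdeal (c ⟨1, by omega⟩).2 hq1
      rw [hmid] at hq0
      exact absurd (lt_of_le_of_lt bot_le hq0 : (⊥ : Ideal R) < ⊥) (lt_irrefl _)
    exact_mod_cast hlen
  · obtain ⟨p, hp0, hpprime⟩ := Ring.not_isField_iff_exists_prime.mp hnf
    haveI := hpprime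
    haveI : (⊥ : Ideal R).IsPrime := Ideal.bot_prime
    have hlt : (⟨⊥, inferInstance⟩ : PrimeSpectrum R) < ⟨p, hpprime⟩ := by
      show (⊥ : Ideal R) < p
      exact bot_lt_iff_ne_bot.mpr hp0
    have hser := Order.LTSeries.length_le_krullDim
      (((RelSeries.singleton (α := PrimeSpectrum R) {(a, b) : PrimeSpectrum R × PrimeSpectrum R | a < b}
      ⟨⊥, inferInstance⟩).snoc ⟨p, hpprime⟩ hlt) : LTSeries (PrimeSpectrum R))
    simpa [RelSeries.snoc, RelSeries.append] using hser
end

section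
/- Let R be a commutative Noetherian ring, α an automorphism of R, and S = R[θ; α]. If S is a primitive ring and R has Krull dimension 0, then S satisfies property (⋄). -/
/-!
STATEMENT 13: Let R be a commutative Noetherian ring, α an automorphism of R, and
S = R[θ; α]. If S is primitive and R has Krull dimension 0 then S satisfies (⋄).
-/

open MulOpposite

universe u

/-- A ring `S` satisfies property (⋄) if every finitely generated essential extension of
every simple right `S`-module is Artinian (right modules are modules over `Sᵐᵒᵖ`). -/
def HasDiamond (S : Type u) [Ring S] : Prop :=
  ∀ (M : Type u) [AddCommGroup M] [Module Sᵐᵒᵖ M], Module.Finite Sᵐᵒᵖ M →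
    ∀ V : Submodule Sᵐᵒᵖ M, IsSimpleModule Sᵐᵒᵖ V →
      (∀ P : Submodule Sᵐᵒᵖ M, P ⊓ V = ⊥ → P = ⊥) → IsArtinian Sᵐᵒᵖ M

/-- A ring is right primitive iff it has a maximal right ideal `I` such that the simple
right module `A/I` is faithful. -/
def IsRightPrimitiveRing (A : Type u) [Ring A] : Prop :=
  ∃ I : Submodule Aᵐᵒᵖ A, IsCoatom I ∧ Module.annihilator Aᵐᵒᵖ (A ⧸ I) = ⊥

namespace SkewDiamond

open Finsupp

variable {R S : Type u} [CommRing R] [Ring S]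

/-- iterate of the automorphism -/
def ap (α : R ≃+* R) (n : ℕ) (r : R) : R := (⇑α)^[n] r

lemma ap_zero_exp (α : R ≃+* R) (r : R) : ap α 0 r = r := rfl

lemma ap_succ (α : R ≃+* R) (n : ℕ) (r : R) : ap α (n+1) r = ap α n (α r) :=
  Function.iterate_succ_apply _ _ _

lemma ap_succ' (α : R ≃+* R) (n : ℕ) (r : R) : ap α (n+1) r = α (ap α n r) :=
  Function.iterate_succ_apply' _ _ _

lemma ap_add_exp (α : R ≃+* R) (m n : ℕ) (r : R) : ap α (m + n) r = ap α m (ap α n r) := by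
  simp [ap, Function.iterate_add_apply]

lemma ap_map_add (α : R ≃+* R) (n : ℕ) (a b : R) : ap α n (a + b) = ap α n a + ap α n b := by
  induction n with
  | zero => rfl
  | succ k ih => rw [ap_succ', ap_succ', ap_succ', ih, map_add]

lemma ap_map_mul (α : R ≃+* R) (n : ℕ) (a b : R) : ap α n (a * b) = ap α n a * ap α n b := by
  induction n with
  | zero => rfl
  | succ k ih => rw [ap_succ', ap_succ', ap_succ', ih, map_mul]

lemma ap_map_zero (α : R ≃+* R) (n : ℕ) : ap α n 0 = 0 := by
  induction n with
  | zero => rfl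
  | succ k ih => rw [ap_succ', ih, map_zero]

lemma ap_map_one (α : R ≃+* R) (n : ℕ) : ap α n 1 = 1 := by
  induction n with
  | zero => rfl
  | succ k ih => rw [ap_succ', ih, map_one]

lemma ap_ap_symm (α : R ≃+* R) (n : ℕ) (r : R) : ap α n (ap α.symm n r) = r := by
  induction n with
  | zero => rfl
  | succ k ih =>
    rw [ap_succ (α := α), ap_succ' (α := α.symm), RingEquiv.apply_symm_apply, ih]

variable (i : R →+* S) (θ : S) in
/-- The additive map sending a finsupp to the corresponding skew polynomial. -/
noncomputable def Phi : (ℕ →₀ R) →+ S :=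
  Finsupp.liftAddHom fun n => (AddMonoidHom.mulRight (θ ^ n)).comp i.toAddMonoidHom

variable (i : R →+* S) (θ : S) in
lemma Phi_apply (f : ℕ →₀ R) : Phi i θ f = f.sum fun n r => i r * θ ^ n := by
  rfl

variable (i : R →+* S) (θ : S) in
lemma Phi_single (n : ℕ) (r : R) : Phi i θ (Finsupp.single n r) = i r * θ ^ n := by
  rw [Phi_apply, Finsupp.sum_single_index]
  simp

variable {α : R ≃+* R} {i : R →+* S} {θ : S} (hS : IsSkewPolynomialRing α i θ)
include hS

lemma theta_pow_mul (n : ℕ) (r : R) : θ ^ n * i r = i (ap α n r) * θ ^ n := by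
  induction n generalizing r with
  | zero => simp [ap_zero_exp]
  | succ k ih =>
    rw [pow_succ, mul_assoc, hS.theta_mul, ← mul_assoc, ih (α r), ← ap_succ, mul_assoc,
      ← pow_succ]

lemma single_mul_single (n m : ℕ) (a b : R) :
    Phi i θ (Finsupp.single n a) * Phi i θ (Finsupp.single m b)
      = Phi i θ (Finsupp.single (n + m) (a * ap α n b)) := by
  rw [Phi_single, Phi_single, Phi_single, map_mul, pow_add]
  rw [mul_assoc, ← mul_assoc (θ ^ n), theta_pow_mul hS, ← mul_assoc, ← mul_assoc, mul_assoc]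

lemma Phi_bijective : Function.Bijective (Phi i θ) := by
  constructor
  · intro f g hfg
    obtain ⟨f', -, hu⟩ := hS.exists_unique_repr (Phi i θ f)
    have h1 := hu f (Phi_apply i θ f)
    have h2 := hu g (by rw [hfg]; exact Phi_apply i θ g)
    rw [h1, h2]
  · intro s
    obtain ⟨f, hf, -⟩ := hS.exists_unique_repr s
    exact ⟨f, by rw [Phi_apply, ← hf]⟩

/-- coefficients of a skew polynomial -/
noncomputable def co (s : S) : ℕ →₀ R := (AddEquiv.ofBijective (Phi i θ) (Phi_bijective hS)).symm s

lemma co_Phi (f : ℕ →₀ R) : co hS (Phi i θ f) = f :=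
  (AddEquiv.ofBijective (Phi i θ) (Phi_bijective hS)).symm_apply_apply f

lemma Phi_co (s : S) : Phi i θ (co hS s) = s :=
  (AddEquiv.ofBijective (Phi i θ) (Phi_bijective hS)).apply_symm_apply s

lemma co_add (s t : S) : co hS (s + t) = co hS s + co hS t := by
  unfold co; exact map_add _ s t

lemma co_sub (s t : S) : co hS (s - t) = co hS s - co hS t := by
  unfold co; exact map_sub _ s t

lemma co_zero : co hS (0 : S) = 0 := by
  unfold co; exact map_zero _

lemma eq_zero_of_co_eq_zero {s : S} (h : co hS s = 0) : s = 0 := by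
  have := Phi_co hS s
  rw [h, map_zero] at this
  exact this.symm

lemma co_finsetSum {ι : Type*} (t : Finset ι) (g : ι → S) :
    co hS (∑ k ∈ t, g k) = ∑ k ∈ t, co hS (g k) := by
  unfold co; exact map_sum _ g t

lemma i_eq (r : R) : i r = Phi i θ (Finsupp.single 0 r) := by
  rw [Phi_single, pow_zero, mul_one]

lemma theta_eq : θ = Phi i θ (Finsupp.single 1 (1 : R)) := by
  rw [Phi_single, map_one, pow_one, one_mul]

omit hS in
lemma sum_single_decomp (s : S) (f : ℕ →₀ R) :
    Phi i θ f = ∑ k ∈ f.support, Phi i θ (Finsupp.single k (f k)) := by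
  conv_lhs => rw [← Finsupp.sum_single f]
  rw [Finsupp.sum]
  exact map_sum (Phi i θ) _ _

lemma mul_decomp_right (s t : S) :
    s * t = ∑ k ∈ (co hS t).support, s * Phi i θ (Finsupp.single k (co hS t k)) := by
  rw [← Finset.mul_sum, ← sum_single_decomp (i := i) (θ := θ) t, Phi_co]

lemma mul_decomp_left (s t : S) :
    s * t = ∑ k ∈ (co hS s).support, Phi i θ (Finsupp.single k (co hS s k)) * t := by
  rw [← Finset.sum_mul, ← sum_single_decomp (i := i) (θ := θ) s, Phi_co]

lemma co_mul_single (s : S) (e : ℕ) (b : R) (n : ℕ) :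
    co hS (s * Phi i θ (Finsupp.single e b)) n
      = if e ≤ n then co hS s (n - e) * ap α (n - e) b else 0 := by
  have key : ∀ f : ℕ →₀ R, co hS (Phi i θ f * Phi i θ (Finsupp.single e b)) n
      = if e ≤ n then f (n - e) * ap α (n - e) b else 0 := by
    intro f
    induction f using Finsupp.induction with
    | zero => simp [co_zero hS]
    | single_add k a f hk ha ih =>
      rw [map_add, add_mul, co_add hS, Finsupp.add_apply, ih, single_mul_single hS,
        co_Phi hS, Finsupp.add_apply]
      have hsingle : (Finsupp.single (k + e) (a * ap α k b) : ℕ →₀ R) n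
          = if e ≤ n then (Finsupp.single k a : ℕ →₀ R) (n - e) * ap α (n - e) b else 0 := by
        rw [Finsupp.single_apply, Finsupp.single_apply]
        by_cases hen : e ≤ n
        · by_cases hkn : k + e = n
          · have hk2 : n - e = k := by omega
            rw [if_pos hkn, if_pos hen, if_pos (by omega : k = n - e), hk2]
          · rw [if_neg hkn, if_pos hen, if_neg (by omega : ¬ k = n - e), zero_mul]
        · rw [if_neg (by omega : ¬ k + e = n), if_neg hen]
      rw [hsingle]
      by_cases hen : e ≤ n
      · rw [if_pos hen, if_pos hen, if_pos hen, add_mul]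
      · rw [if_neg hen, if_neg hen, if_neg hen, add_zero]
  have := key (co hS s)
  rwa [Phi_co hS] at this

lemma co_single_mul (s : S) (e : ℕ) (b : R) (n : ℕ) :
    co hS (Phi i θ (Finsupp.single e b) * s) n
      = if e ≤ n then b * ap α e (co hS s (n - e)) else 0 := by
  have key : ∀ f : ℕ →₀ R, co hS (Phi i θ (Finsupp.single e b) * Phi i θ f) n
      = if e ≤ n then b * ap α e (f (n - e)) else 0 := by
    intro f
    induction f using Finsupp.induction with
    | zero =>
      simp only [map_zero, mul_zero, co_zero hS, Finsupp.coe_zero, Pi.zero_apply,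
        ap_map_zero, mul_zero, ite_self]
    | single_add k a f hk ha ih =>
      rw [map_add, mul_add, co_add hS, Finsupp.add_apply, ih, single_mul_single hS,
        co_Phi hS, Finsupp.add_apply]
      have hsingle : (Finsupp.single (e + k) (b * ap α e a) : ℕ →₀ R) n
          = if e ≤ n then b * ap α e ((Finsupp.single k a : ℕ →₀ R) (n - e)) else 0 := by
        rw [Finsupp.single_apply, Finsupp.single_apply]
        by_cases hen : e ≤ n
        · by_cases hkn : e + k = n
          · rw [if_pos hkn, if_pos hen, if_pos (by omega : k = n - e)]
          · rw [if_neg hkn, if_pos hen, if_neg (by omega : ¬ k = n - e), ap_map_zero, mul_zero]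
        · rw [if_neg (by omega : ¬ e + k = n), if_neg hen]
      rw [hsingle]
      by_cases hen : e ≤ n
      · rw [if_pos hen, if_pos hen, if_pos hen, ap_map_add, mul_add]
      · rw [if_neg hen, if_neg hen, if_neg hen, add_zero]
  have := key (co hS s)
  rwa [Phi_co hS] at this

lemma co_mul_i (s : S) (r : R) (n : ℕ) : co hS (s * i r) n = co hS s n * ap α n r := by
  have := co_mul_single hS s 0 r n
  rw [← i_eq hS] at this
  simpa using this

lemma co_mul_theta (s : S) (n : ℕ) :
    co hS (s * θ) n = if 1 ≤ n then co hS s (n - 1) else 0 := by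
  have := co_mul_single hS s 1 1 n
  rw [← theta_eq hS, ap_map_one, mul_one] at this
  exact this

lemma co_mul_theta_succ (s : S) (n : ℕ) : co hS (s * θ) (n + 1) = co hS s n := by
  rw [co_mul_theta hS]; simp

lemma co_mul_theta_zero (s : S) : co hS (s * θ) 0 = 0 := by
  rw [co_mul_theta hS]; simp

lemma mul_theta_ne_zero {s : S} (h : s ≠ 0) : s * θ ≠ 0 := by
  intro h0
  apply h
  apply eq_zero_of_co_eq_zero hS
  ext n
  have := co_mul_theta_succ hS s n
  rw [h0, co_zero hS] at this
  exact this.symm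

/-- coefficients of a right multiple stay in an ideal -/
lemma coeff_mul_right_mem (A : Ideal R) {y : S} (hy : ∀ n, co hS y n ∈ A) (s : S) :
    ∀ n, co hS (y * s) n ∈ A := by
  intro n
  rw [mul_decomp_right hS y s, co_finsetSum hS, Finsupp.finset_sum_apply]
  apply Ideal.sum_mem
  intro k hk
  rw [co_mul_single hS]
  by_cases hkn : k ≤ n
  · rw [if_pos hkn]; exact Ideal.mul_mem_right _ _ (hy _)
  · rw [if_neg hkn]; exact A.zero_mem

lemma ap_mem_of_mem (A : Ideal R) (hA : ∀ r ∈ A, α r ∈ A) (n : ℕ) {r : R} (hr : r ∈ A) :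
    ap α n r ∈ A := by
  induction n with
  | zero => exact hr
  | succ k ih => rw [ap_succ']; exact hA _ ih

/-- coefficients of a left multiple stay in an α-stable ideal -/
lemma coeff_mul_left_mem (A : Ideal R) (hA : ∀ r ∈ A, α r ∈ A) {y : S}
    (hy : ∀ n, co hS y n ∈ A) (s : S) : ∀ n, co hS (s * y) n ∈ A := by
  intro n
  rw [mul_decomp_left hS s y, co_finsetSum hS, Finsupp.finset_sum_apply]
  apply Ideal.sum_mem
  intro k hk
  rw [co_single_mul hS]
  by_cases hkn : k ≤ n
  · rw [if_pos hkn]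
    exact Ideal.mul_mem_left _ _ (ap_mem_of_mem hS A hA k (hy _))
  · rw [if_neg hkn]; exact A.zero_mem

lemma coeff_mul_mem_mul (A B : Ideal R) (hB : ∀ r ∈ B, α r ∈ B) {y z : S}
    (hy : ∀ n, co hS y n ∈ A) (hz : ∀ n, co hS z n ∈ B) : ∀ n, co hS (y * z) n ∈ A * B := by
  intro n
  rw [mul_decomp_left hS y z, co_finsetSum hS, Finsupp.finset_sum_apply]
  apply Ideal.sum_mem
  intro k hk
  rw [co_single_mul hS]
  by_cases hkn : k ≤ n
  · rw [if_pos hkn]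
    exact Ideal.mul_mem_mul (hy _) (ap_mem_of_mem hS B hB k (hz _))
  · rw [if_neg hkn]; exact Submodule.zero_mem _

/-- order of vanishing of a product -/
lemma ord_mul {p q : ℕ} {y z : S} (hy : ∀ k < p, co hS y k = 0) (hz : ∀ k < q, co hS z k = 0) :
    ∀ n < p + q, co hS (y * z) n = 0 := by
  intro n hn
  rw [mul_decomp_left hS y z, co_finsetSum hS, Finsupp.finset_sum_apply]
  apply Finset.sum_eq_zero
  intro k hk
  rw [co_single_mul hS]
  by_cases hkn : k ≤ n
  · rw [if_pos hkn]
    have hyk : co hS y k ≠ 0 := Finsupp.mem_support_iff.mp hk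
    have hpk : p ≤ k := by
      by_contra hc
      exact hyk (hy k (by omega))
    have : co hS z (n - k) = 0 := hz _ (by omega)
    rw [this, ap_map_zero, mul_zero]
  · rw [if_neg hkn]

lemma low_vanish_mul_right {N : ℕ} {y : S} (hy : ∀ k < N, co hS y k = 0) (s : S) :
    ∀ k < N, co hS (y * s) k = 0 := by
  intro k hk
  exact ord_mul hS hy (fun c hc => absurd hc (Nat.not_lt_zero c)) k (by omega)

section Core

variable {M : Type u} [AddCommGroup M] [Module Sᵐᵒᵖ M]

/-- The ideal of leading coefficients in degree `n` of annihilating polynomials of `m`. -/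
def Lset (m : M) (n : ℕ) : Ideal R where
  carrier := {r | ∃ y : S, op y • m = 0 ∧ (∀ k, n < k → co hS y k = 0) ∧ co hS y n = r}
  zero_mem' := ⟨0, by simp, fun k _ => by simp [co_zero hS], by simp [co_zero hS]⟩
  add_mem' := by
    rintro a b ⟨y, hy, hyv, rfl⟩ ⟨z, hz, hzv, rfl⟩
    refine ⟨y + z, ?_, ?_, ?_⟩
    · rw [op_add, add_smul, hy, hz, add_zero]
    · intro k hk
      rw [co_add hS, Finsupp.add_apply, hyv k hk, hzv k hk, add_zero]
    · rw [co_add hS, Finsupp.add_apply]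
  smul_mem' := by
    rintro c r ⟨y, hy, hyv, rfl⟩
    refine ⟨y * i (ap α.symm n c), ?_, ?_, ?_⟩
    · rw [op_mul, mul_smul, hy, smul_zero]
    · intro k hk
      rw [co_mul_i hS, hyv k hk, zero_mul]
    · rw [co_mul_i hS, ap_ap_symm, smul_eq_mul, mul_comm]

lemma Lset_mono (m : M) : Monotone (Lset hS m) := by
  apply monotone_nat_of_le_succ
  intro n r hr
  obtain ⟨y, hy, hyv, rfl⟩ := hr
  refine ⟨y * θ, ?_, ?_, ?_⟩
  · rw [op_mul, mul_smul, hy, smul_zero]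
  · intro k hk
    rw [co_mul_theta hS, if_pos (by omega : 1 ≤ k)]
    exact hyv (k - 1) (by omega)
  · exact co_mul_theta_succ hS y n

lemma cyclic_fg [IsNoetherianRing R] [ComplementedLattice (Submodule R R)]
    (V : Submodule Sᵐᵒᵖ M) (hV : IsSimpleModule Sᵐᵒᵖ V)
    (hess : ∀ P : Submodule Sᵐᵒᵖ M, P ⊓ V = ⊥ → P = ⊥) (m : M) :
    ∃ N : ℕ, ∀ s : S, ∃ c : ℕ → R,
      op s • m = ∑ n ∈ Finset.range N, op (θ ^ n * i (c n)) • m := by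
  obtain ⟨N, hN⟩ := (monotone_stabilizes_iff_noetherian.mpr inferInstance)
    ⟨Lset hS m, Lset_mono hS m⟩
  have hstab : ∀ n, N ≤ n → Lset hS m n = Lset hS m N := fun n hn => (hN n hn).symm
  by_cases h1 : (1 : R) ∈ Lset hS m N
  · -- there is a "monic" annihilating polynomial of degree N; divide by it
    obtain ⟨g, hgm, hgtop, hgN⟩ := h1
    refine ⟨N, fun s => ?_⟩
    have DIV : ∀ d : ℕ, ∀ s : S, (∀ k, d ≤ k → co hS s k = 0) →
        ∃ q r' : S, s = g * q + r' ∧ ∀ k, N ≤ k → co hS r' k = 0 := by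
      intro d
      induction d with
      | zero =>
        intro s hs
        have h0 : co hS s = 0 := Finsupp.ext fun k => hs k (Nat.zero_le k)
        refine ⟨0, 0, ?_, fun k _ => by simp [co_zero hS]⟩
        rw [eq_zero_of_co_eq_zero hS h0, mul_zero, add_zero]
      | succ d ih =>
        intro s hs
        by_cases hdN : d < N
        · exact ⟨0, s, by rw [mul_zero, zero_add], fun k hk => hs k (by omega)⟩
        · push_neg at hdN
          set b := ap α.symm N (co hS s d) with hb
          set s' := s - g * Phi i θ (Finsupp.single (d - N) b) with hs'
          have hgsb : ∀ k, co hS (g * Phi i θ (Finsupp.single (d - N) b)) k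
              = if d - N ≤ k then co hS g (k - (d - N)) * ap α (k - (d - N)) b else 0 :=
            fun k => co_mul_single hS g (d - N) b k
          have hs'van : ∀ k, d ≤ k → co hS s' k = 0 := by
            intro k hk
            rw [hs', co_sub hS, Finsupp.sub_apply, hgsb k]
            rcases eq_or_lt_of_le hk with hkd | hkd
            · rw [if_pos (by omega : d - N ≤ k), ← hkd]
              rw [(by omega : d - (d - N) = N), hgN, one_mul, hb, ap_ap_symm, sub_self]
            · rw [if_pos (by omega : d - N ≤ k), hgtop (k - (d - N)) (by omega), zero_mul,
                hs k (by omega), sub_zero]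
          obtain ⟨q, r', hqr, hr'⟩ := ih s' hs'van
          refine ⟨Phi i θ (Finsupp.single (d - N) b) + q, r', ?_, hr'⟩
          rw [mul_add]
          rw [hs'] at hqr
          have := sub_eq_iff_eq_add.mp hqr
          rw [this]; abel
    obtain ⟨d, hsub⟩ := Finset.exists_nat_subset_range (co hS s).support
    have hd : ∀ k, d ≤ k → co hS s k = 0 := by
      intro k hk
      by_contra hc
      have := hsub (Finsupp.mem_support_iff.mpr hc)
      rw [Finset.mem_range] at this
      omega
    obtain ⟨q, r', hqr, hr'⟩ := DIV d s hd
    refine ⟨fun n => ap α.symm n (co hS r' n), ?_⟩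
    have hr'' : r' = ∑ n ∈ Finset.range N, θ ^ n * i (ap α.symm n (co hS r' n)) := by
      have h2 : co hS r' = ∑ n ∈ Finset.range N, Finsupp.single n (co hS r' n) := by
        ext k
        rw [Finsupp.finset_sum_apply]
        by_cases hk : k < N
        · rw [Finset.sum_eq_single_of_mem k (Finset.mem_range.mpr hk)]
          · rw [Finsupp.single_eq_same]
          · intro n _ hne
            rw [Finsupp.single_apply, if_neg hne]
        · rw [hr' k (by omega), Finset.sum_eq_zero]
          intro n hn
          rw [Finset.mem_range] at hn
          rw [Finsupp.single_apply, if_neg (by omega)]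
      calc r' = Phi i θ (co hS r') := (Phi_co hS r').symm
        _ = ∑ n ∈ Finset.range N, Phi i θ (Finsupp.single n (co hS r' n)) := by
              conv_lhs => rw [h2, map_sum]
        _ = ∑ n ∈ Finset.range N, θ ^ n * i (ap α.symm n (co hS r' n)) := by
              apply Finset.sum_congr rfl
              intro n _
              rw [Phi_single, theta_pow_mul hS, ap_ap_symm]
    rw [hqr, op_add, add_smul, op_mul, mul_smul, hgm, smul_zero, zero_add]
    conv_lhs => rw [hr'']
    have hopsum : op (∑ n ∈ Finset.range N, θ ^ n * i (ap α.symm n (co hS r' n)))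
        = ∑ n ∈ Finset.range N, op (θ ^ n * i (ap α.symm n (co hS r' n))) :=
      map_sum (MulOpposite.opAddEquiv : S ≃+ Sᵐᵒᵖ) _ _
    rw [hopsum, Finset.sum_smul]
  · -- impossible: contradiction with essentiality and simplicity of V
    exfalso
    have hL : Lset hS m N ≠ ⊤ := fun h => h1 (h ▸ Submodule.mem_top)
    obtain ⟨L', hLL'⟩ := exists_isCompl (Lset hS m N)
    have hL'ne : L' ≠ ⊥ := by
      intro h
      apply hL
      have := hLL'.codisjoint
      rw [h, codisjoint_bot] at this
      exact this
    obtain ⟨f, hfL', hf0⟩ := (Submodule.ne_bot_iff L').mp hL'ne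
    have hdisj : ∀ x, x ∈ Lset hS m N → x ∈ L' → x = 0 := fun x hx hx' =>
      Submodule.disjoint_def.mp hLL'.disjoint x hx hx'
    have LemX : ∀ y : S, (∀ n, co hS y n ∈ L') → (∀ n < N, co hS y n = 0) →
        op y • m = 0 → y = 0 := by
      intro y hyL' hyvan hym
      by_contra hy0
      have hco : co hS y ≠ 0 := fun h => hy0 (eq_zero_of_co_eq_zero hS h)
      have hsupp : (co hS y).support.Nonempty := Finsupp.support_nonempty_iff.mpr hco
      set d := (co hS y).support.max' hsupp with hd
      have hdne : co hS y d ≠ 0 :=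
        Finsupp.mem_support_iff.mp ((co hS y).support.max'_mem hsupp)
      have hdN : N ≤ d := by
        by_contra hc
        exact hdne (hyvan d (by omega))
      have htop : ∀ k, d < k → co hS y k = 0 := by
        intro k hk
        by_contra hc
        have := Finset.le_max' _ k (Finsupp.mem_support_iff.mpr hc)
        omega
      have hmem : co hS y d ∈ Lset hS m d := ⟨y, hym, htop, rfl⟩
      rw [hstab d hdN] at hmem
      exact hdne (hdisj _ hmem (hyL' d))
    set w := Phi i θ (Finsupp.single N f) with hw
    have hcow : co hS w = Finsupp.single N f := co_Phi hS _
    have hwL' : ∀ n, co hS w n ∈ L' := by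
      intro n
      rw [hcow, Finsupp.single_apply]
      split
      · exact hfL'
      · exact L'.zero_mem
    have hwvan : ∀ n < N, co hS w n = 0 := by
      intro n hn
      rw [hcow, Finsupp.single_apply, if_neg (by omega)]
    have hwm : op w • m ≠ 0 := by
      intro h
      apply hf0
      apply hdisj f ?_ hfL'
      refine ⟨w, h, ?_, ?_⟩
      · intro k hk
        rw [hcow, Finsupp.single_apply, if_neg (by omega)]
      · rw [hcow, Finsupp.single_eq_same]
    have hWV : Submodule.span Sᵐᵒᵖ {op w • m} ⊓ V ≠ ⊥ := by
      intro h
      exact hwm (Submodule.span_singleton_eq_bot.mp (hess _ h))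
    obtain ⟨v, hvmem, hv0⟩ := (Submodule.ne_bot_iff _).mp hWV
    obtain ⟨hvW, hvV⟩ := Submodule.mem_inf.mp hvmem
    obtain ⟨a, ha⟩ := Submodule.mem_span_singleton.mp hvW
    set y₁ := w * unop a with hy₁def
    have hy₁ : op y₁ • m = v := by
      rw [hy₁def, op_mul, MulOpposite.op_unop, mul_smul, ha]
    have hy₁L' : ∀ n, co hS y₁ n ∈ L' := coeff_mul_right_mem hS L' hwL' _
    have hy₁van : ∀ n < N, co hS y₁ n = 0 := low_vanish_mul_right hS hwvan _
    have hy₁0 : y₁ ≠ 0 := by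
      intro h
      apply hv0
      rw [← hy₁, h, op_zero, zero_smul]
    set z₁ := y₁ * θ with hz₁def
    have hz₁L' : ∀ n, co hS z₁ n ∈ L' := coeff_mul_right_mem hS L' hy₁L' _
    have hz₁van : ∀ n < N, co hS z₁ n = 0 := low_vanish_mul_right hS hy₁van _
    have hz₁0 : z₁ ≠ 0 := mul_theta_ne_zero hS hy₁0
    have hz₁m : op z₁ • m ≠ 0 := fun h => hz₁0 (LemX z₁ hz₁L' hz₁van h)
    have hz₁v : op z₁ • m = op θ • v := by rw [hz₁def, op_mul, mul_smul, hy₁]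
    have hz₁V : op θ • v ∈ V := V.smul_mem _ hvV
    haveI := hV
    set v' : ↥V := ⟨op θ • v, hz₁V⟩ with hv'
    have hv'0 : v' ≠ 0 := by
      intro h
      apply hz₁m
      rw [hz₁v]
      exact Subtype.ext_iff.mp h
    have hspan : Submodule.span Sᵐᵒᵖ {v'} = ⊤ := by
      rcases eq_bot_or_eq_top (Submodule.span Sᵐᵒᵖ {v'}) with h | h
      · exact absurd (Submodule.span_singleton_eq_bot.mp h) hv'0
      · exact h
    have hvmem' : (⟨v, hvV⟩ : ↥V) ∈ Submodule.span Sᵐᵒᵖ {v'} := by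
      rw [hspan]; trivial
    obtain ⟨a', ha'⟩ := Submodule.mem_span_singleton.mp hvmem'
    have ha'' : a' • (op θ • v) = v := by
      have := Subtype.ext_iff.mp ha'
      simpa using this
    set y₂ := y₁ - z₁ * unop a' with hy₂def
    have hy₂m : op y₂ • m = 0 := by
      rw [hy₂def, op_sub, sub_smul, hy₁, op_mul, MulOpposite.op_unop, mul_smul, hz₁v, ha'',
        sub_self]
    have hy₂L' : ∀ n, co hS y₂ n ∈ L' := by
      intro n
      rw [hy₂def, co_sub hS, Finsupp.sub_apply]
      exact sub_mem (hy₁L' n) (coeff_mul_right_mem hS L' hz₁L' _ n)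
    have hy₂van : ∀ n < N, co hS y₂ n = 0 := by
      intro n hn
      rw [hy₂def, co_sub hS, Finsupp.sub_apply, hy₁van n hn,
        low_vanish_mul_right hS hz₁van _ n hn, sub_zero]
    have hy₂0 : y₂ = 0 := LemX y₂ hy₂L' hy₂van hy₂m
    have heq : y₁ = y₁ * (θ * unop a') := by
      have h3 := sub_eq_zero.mp hy₂0
      conv_lhs => rw [h3, hz₁def, mul_assoc]
    have hsupp : (co hS y₁).support.Nonempty :=
      Finsupp.support_nonempty_iff.mpr (fun h => hy₁0 (eq_zero_of_co_eq_zero hS h))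
    set o := (co hS y₁).support.min' hsupp with ho
    have hone : co hS y₁ o ≠ 0 :=
      Finsupp.mem_support_iff.mp ((co hS y₁).support.min'_mem hsupp)
    have hlow : ∀ k < o, co hS y₁ k = 0 := by
      intro k hk
      by_contra hc
      have := Finset.min'_le _ k (Finsupp.mem_support_iff.mpr hc)
      omega
    have hts : ∀ k < 1, co hS (θ * unop a') k = 0 := by
      intro k hk
      have hk0 : k = 0 := by omega
      subst hk0
      have := co_single_mul hS (unop a') 1 1 0
      rw [← theta_eq hS] at this
      rw [this, if_neg (by omega)]
    have hzero := ord_mul hS hlow hts o (by omega)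
    rw [← heq] at hzero
    exact hone hzero

end Core
section Reduced

/-- A right-primitive skew polynomial ring has reduced coefficient ring. -/
lemma isReduced_of_primitive [IsNoetherianRing R]
    (hprim : ∃ I : Submodule Sᵐᵒᵖ S, IsCoatom I ∧ Module.annihilator Sᵐᵒᵖ (S ⧸ I) = ⊥) :
    IsReduced R := by
  obtain ⟨I₀, hco, hann⟩ := hprim
  have hnontriv : Nontrivial R := by
    by_contra h
    rw [not_nontrivial_iff_subsingleton] at h
    have hSsub : Subsingleton S := ⟨fun a b => by
      have ha := Phi_co hS a
      have hb := Phi_co hS b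
      have hab : co hS a = co hS b := Finsupp.ext fun n => Subsingleton.elim _ _
      rw [← ha, ← hb, hab]⟩
    exact hco.1 (Subsingleton.elim I₀ ⊤)
  obtain ⟨c, hc⟩ := IsNoetherianRing.isNilpotent_nilradical R
  have hc1 : c ≠ 0 := by
    rintro rfl
    rw [pow_zero, Ideal.one_eq_top] at hc
    have h1 : (1 : R) ∈ (0 : Ideal R) := hc ▸ Submodule.mem_top
    rw [Ideal.zero_eq_bot, Submodule.mem_bot] at h1
    exact one_ne_zero h1
  have hα : ∀ r ∈ nilradical R, α r ∈ nilradical R := by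
    intro r hr
    rw [mem_nilradical] at hr ⊢
    exact hr.map (α : R →+* R)
  have hpowcoeff : ∀ k, 1 ≤ k → ∀ y : S, (∀ n, co hS y n ∈ nilradical R) →
      ∀ n, co hS (y ^ k) n ∈ nilradical R ^ k := by
    intro k
    induction k with
    | zero => omega
    | succ k ih =>
      intro _ y hy n
      by_cases hk0 : k = 0
      · subst hk0
        rw [pow_one, pow_one]
        exact hy n
      · have h1 : ∀ n, co hS (y ^ k) n ∈ nilradical R ^ k := ih (by omega) y hy
        have h2 := coeff_mul_mem_mul hS (nilradical R ^ k) (nilradical R) hα h1 hy n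
        rw [pow_succ, pow_succ]
        exact h2
  have hnil : ∀ y : S, (∀ n, co hS y n ∈ nilradical R) → IsNilpotent y := by
    intro y hy
    refine ⟨c, ?_⟩
    apply eq_zero_of_co_eq_zero hS
    ext n
    have h3 := hpowcoeff c (by omega) y hy n
    rw [hc, Ideal.zero_eq_bot] at h3
    simpa using h3
  have hJI : ∀ y : S, (∀ n, co hS y n ∈ nilradical R) → y ∈ I₀ := by
    intro y hy
    by_contra hyI
    have hlt : I₀ < I₀ ⊔ Submodule.span Sᵐᵒᵖ {y} := by
      refine lt_of_le_of_ne le_sup_left ?_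
      intro h
      apply hyI
      have h4 : y ∈ I₀ ⊔ Submodule.span Sᵐᵒᵖ {y} :=
        Submodule.mem_sup_right (Submodule.mem_span_singleton_self y)
      rw [← h] at h4
      exact h4
    have htop := hco.2 _ hlt
    have h1 : (1 : S) ∈ I₀ ⊔ Submodule.span Sᵐᵒᵖ {y} := by rw [htop]; trivial
    obtain ⟨p, hp, qq, hq, hpq⟩ := Submodule.mem_sup.mp h1
    obtain ⟨a, ha⟩ := Submodule.mem_span_singleton.mp hq
    have hqz : qq = y * unop a := by
      rw [← ha]
      conv_lhs => rw [← MulOpposite.op_unop a, op_smul_eq_mul]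
    have hzJn : ∀ n, co hS (y * unop a) n ∈ nilradical R :=
      coeff_mul_right_mem hS (nilradical R) hy _
    obtain ⟨cz, hcz⟩ := hnil _ hzJn
    set z := y * unop a with hzdef
    have hp1 : p = 1 - z := by rw [← hpq, hqz]; abel
    have hgeom : p * (∑ j ∈ Finset.range cz, z ^ j) = 1 := by
      rw [hp1]
      have := mul_geom_sum z cz
      have h5 : (1 - z) * ∑ j ∈ Finset.range cz, z ^ j = -(z ^ cz - 1) := by
        rw [← this, show (1 : S) - z = -(z - 1) from (neg_sub z 1).symm, neg_mul]
      rw [h5, hcz, zero_sub, neg_neg]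
    have h1mem : (1 : S) ∈ I₀ := by
      have := I₀.smul_mem (op (∑ j ∈ Finset.range cz, z ^ j)) hp
      rwa [op_smul_eq_mul, hgeom] at this
    apply hco.1
    rw [Submodule.eq_top_iff']
    intro x
    have := I₀.smul_mem (op x) h1mem
    rwa [op_smul_eq_mul, one_mul] at this
  refine ⟨fun {r} hr => ?_⟩
  have hJ : ∀ n, co hS (i r) n ∈ nilradical R := by
    intro n
    rw [i_eq hS, co_Phi hS, Finsupp.single_apply]
    split
    · exact mem_nilradical.mpr hr
    · exact Submodule.zero_mem _
  have hmem : op (i r) ∈ Module.annihilator Sᵐᵒᵖ (S ⧸ I₀) := by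
    rw [Module.mem_annihilator]
    intro x
    obtain ⟨s, rfl⟩ := Submodule.Quotient.mk_surjective I₀ x
    rw [← Submodule.Quotient.mk_smul, Submodule.Quotient.mk_eq_zero]
    rw [op_smul_eq_mul]
    exact hJI _ (coeff_mul_left_mem hS (nilradical R) hα hJ s)
  rw [hann, Submodule.mem_bot] at hmem
  have hir : i r = 0 := (MulOpposite.op_eq_zero_iff _).mp hmem
  have hsingle : Finsupp.single 0 r = (0 : ℕ →₀ R) := by
    apply (Phi_bijective hS).1
    rw [← i_eq hS, hir, map_zero]
  exact Finsupp.single_eq_zero.mp hsingle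

end Reduced
end SkewDiamond

section Semisimple

open Order in
lemma isSemisimpleRing_of_dim_zero (R : Type u) [CommRing R]
    [IsNoetherianRing R] [IsReduced R] (hdim : ringKrullDim R = 0) :
    IsSemisimpleRing R := by
  have hmax : ∀ p : Ideal R, p.IsPrime → p.IsMaximal := by
    intro p hp
    obtain ⟨mm, hm, hle⟩ := p.exists_le_maximal hp.ne_top
    rcases eq_or_lt_of_le hle with h | h
    · rwa [h]
    · exfalso
      let P : PrimeSpectrum R := ⟨p, hp⟩
      let Q : PrimeSpectrum R := ⟨mm, hm.isPrime⟩
      have hPQ : P < Q := (PrimeSpectrum.asIdeal_lt_asIdeal P Q).mp h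
      have hlen := Order.LTSeries.length_le_krullDim
        ((RelSeries.singleton {(a, b) : PrimeSpectrum R × PrimeSpectrum R | a < b} P).snoc Q (by rwa [RelSeries.last_singleton]))
      rw [RelSeries.snoc_length, RelSeries.singleton_length] at hlen
      have hkd : krullDim (PrimeSpectrum R) = 0 := hdim
      rw [hkd] at hlen
      norm_num at hlen
  have hfinprime : {I : Ideal R | I.IsPrime}.Finite := by
    apply (minimalPrimes.finite_of_isNoetherianRing R).subset
    intro p hp
    haveI : p.IsPrime := hp
    obtain ⟨q, hq, hqle⟩ := Ideal.exists_minimalPrimes_le (I := (⊥ : Ideal R)) (J := p) bot_le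
    have hqp : q = p := (hmax q hq.1.1).eq_of_le Ideal.IsPrime.ne_top' hqle
    rw [← hqp]
    exact hq
  haveI hfin : Finite {I : Ideal R | I.IsMaximal} :=
    (hfinprime.subset fun I hI => hI.isPrime).to_subtype
  letI : ∀ I : {I : Ideal R | I.IsMaximal}, Field (R ⧸ I.1) := fun I =>
    @Ideal.Quotient.field R _ I.1 (Set.mem_setOf.mp I.2)
  have ebot : (⊥ : Ideal R) = ⨅ I : {I : Ideal R | I.IsMaximal}, I.1 := by
    apply le_antisymm bot_le
    intro x hx
    rw [Submodule.mem_iInf] at hx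
    have hnilp : IsNilpotent x := by
      rw [nilpotent_iff_mem_prime]
      intro J hJ
      exact hx ⟨J, hmax J hJ⟩
    rw [Submodule.mem_bot]
    exact hnilp.eq_zero
  have hpair : Pairwise (Function.onFun IsCoprime fun I : {I : Ideal R | I.IsMaximal} => I.1) := by
    intro I J h
    exact Ideal.isCoprime_iff_sup_eq.mpr <|
      Ideal.IsMaximal.coprime_of_ne (Set.mem_setOf.mp I.2) (Set.mem_setOf.mp J.2)
        (by rwa [Ne, Subtype.coe_inj])
  have equiv : R ≃+* ∀ I : {I : Ideal R | I.IsMaximal}, R ⧸ I.1 :=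
    (RingEquiv.quotientBot R).symm.trans ((Ideal.quotEquivOfEq ebot).trans
      (Ideal.quotientInfRingEquivPiQuotient _ hpair))
  exact equiv.symm.isSemisimpleRing

end Semisimple

theorem hasDiamond_of_primitive_of_krullDim_zero
    {R S : Type u} [CommRing R] [IsNoetherianRing R] [Ring S]
    (α : R ≃+* R) (i : R →+* S) (θ : S) (hS : IsSkewPolynomialRing α i θ)
    (hprim : IsRightPrimitiveRing S)
    (hdim : ringKrullDim R = 0) :
    HasDiamond S := by
  haveI hred : IsReduced R := SkewDiamond.isReduced_of_primitive hS hprim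
  haveI hss : IsSemisimpleRing R := isSemisimpleRing_of_dim_zero R hdim
  intro M _ _ hfin V hV hess
  classical
  let ρ : R →+* Sᵐᵒᵖ := i.toOpposite (fun x y => by
    unfold Commute SemiconjBy
    rw [← map_mul, ← map_mul, mul_comm])
  letI modRM : Module R M := Module.compHom M ρ
  have hRsmul : ∀ (r : R) (x : M), r • x = op (i r) • x := fun r x => rfl
  obtain ⟨G, hG⟩ := hfin.fg_top
  choose Nf hNf using fun g : M => SkewDiamond.cyclic_fg hS V hV hess g
  set NN : ℕ := (G.sup Nf) + 1 with hNN
  have hNle : ∀ g ∈ G, Nf g ≤ NN := fun g hg => (Finset.le_sup hg).trans (Nat.le_succ _)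
  have hC1 : ∀ g ∈ G, ∀ s : S, ∃ c : ℕ → R,
      op s • g = ∑ n ∈ Finset.range NN, op (θ ^ n * i (c n)) • g := by
    intro g hg s
    obtain ⟨c, hc⟩ := hNf g s
    refine ⟨fun n => if n < Nf g then c n else 0, ?_⟩
    rw [hc]
    calc ∑ n ∈ Finset.range (Nf g), op (θ ^ n * i (c n)) • g
        = ∑ n ∈ Finset.range (Nf g),
            op (θ ^ n * i (if n < Nf g then c n else 0)) • g := by
          apply Finset.sum_congr rfl
          intro n hn
          rw [if_pos (Finset.mem_range.mp hn)]
      _ = ∑ n ∈ Finset.range NN,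
            op (θ ^ n * i (if n < Nf g then c n else 0)) • g := by
          apply Finset.sum_subset (Finset.range_subset_range.mpr (hNle g hg))
          intro n _ hn
          rw [Finset.mem_range] at hn
          rw [if_neg hn, map_zero, mul_zero, op_zero, zero_smul]
  set bigF : Finset M := (G ×ˢ Finset.range NN).image (fun p => op (θ ^ p.2) • p.1)
    with hbigF
  have hgen : ∀ g ∈ G, ∀ n, n < NN → op (θ ^ n) • g ∈ Submodule.span R (↑bigF : Set M) := by
    intro g hg n hn
    apply Submodule.subset_span
    rw [hbigF]
    exact Finset.mem_coe.mpr (Finset.mem_image.mpr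
      ⟨(g, n), Finset.mem_product.mpr ⟨hg, Finset.mem_range.mpr hn⟩, rfl⟩)
  have hC2 : ∀ g ∈ G, ∀ s : S, op s • g ∈ Submodule.span R (↑bigF : Set M) := by
    intro g hg s
    obtain ⟨c, hc⟩ := hC1 g hg s
    rw [hc]
    apply Submodule.sum_mem
    intro n hn
    have heq : op (θ ^ n * i (c n)) • g = (c n) • (op (θ ^ n) • g) := by
      rw [hRsmul, op_mul, mul_smul]
    rw [heq]
    exact Submodule.smul_mem _ _ (hgen g hg n (Finset.mem_range.mp hn))
  have hstable : ∀ x ∈ Submodule.span R (↑bigF : Set M), ∀ (a : Sᵐᵒᵖ),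
      a • x ∈ Submodule.span R (↑bigF : Set M) := by
    intro x hx
    refine Submodule.span_induction ?_ ?_ ?_ ?_ hx
    · intro x hxmem a
      rw [hbigF] at hxmem
      obtain ⟨⟨g, n⟩, hmem, rfl⟩ := Finset.mem_image.mp (Finset.mem_coe.mp hxmem)
      obtain ⟨hg, hn⟩ := Finset.mem_product.mp hmem
      have h2 : a • (op (θ ^ n) • (g : M)) = op (θ ^ n * unop a) • g := by
        rw [op_mul, MulOpposite.op_unop, mul_smul]
      rw [h2]
      exact hC2 g hg _
    · intro a
      rw [smul_zero]
      exact Submodule.zero_mem _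
    · intro x y _ _ ihx ihy a
      rw [smul_add]
      exact Submodule.add_mem _ (ihx a) (ihy a)
    · intro r x _ ih a
      have h3 : a • (r • x) = (a * ρ r) • x := by
        rw [hRsmul, ← mul_smul]
        rfl
      rw [h3]
      exact ih _
  have hPtop : Submodule.span R (↑bigF : Set M) = ⊤ := by
    rw [eq_top_iff]
    intro x _
    have hx : x ∈ Submodule.span Sᵐᵒᵖ (↑G : Set M) := by rw [hG]; trivial
    refine Submodule.span_induction ?_ ?_ ?_ ?_ hx
    · intro g hg
      have := hC2 g (Finset.mem_coe.mp hg) 1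
      rwa [op_one, one_smul] at this
    · exact Submodule.zero_mem _
    · intro x y _ _ ihx ihy
      exact Submodule.add_mem _ ihx ihy
    · intro a x _ ih
      exact hstable x ih a
  haveI hfinR : Module.Finite R M := ⟨⟨bigF, hPtop⟩⟩
  haveI hartR : IsArtinian R M := inferInstance
  let F : Submodule Sᵐᵒᵖ M → Submodule R M := fun p =>
    { carrier := p
      add_mem' := fun h1 h2 => p.add_mem h1 h2
      zero_mem' := p.zero_mem
      smul_mem' := fun r x hx => p.smul_mem (ρ r) hx }
  have hFlt : ∀ {p q : Submodule Sᵐᵒᵖ M}, p < q → F p < F q := by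
    intro p q h
    rw [lt_iff_le_not_ge] at h ⊢
    constructor
    · intro x hx
      exact h.1 hx
    · intro hc
      exact h.2 (fun x hx => hc hx)
  exact ⟨Subrelation.wf (fun {p q} h => hFlt h) (InvImage.wf F IsWellFounded.wf)⟩
end
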